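/- arXiv:1903.06573 — 12 statements merged into one kernel-verified Lean document; each statement's English description precedes it below -/
import Mathlib

section
/- Let A : H → F be a bounded operator and W : F → F positive semidefinite. The equation Az = x admits a W-least-squares solution for every x ∈ F if and only if R(A) + W(R(A))^⊥ = F, where W(R(A))^⊥ is the orthogonal complement of the image W(R(A)). -/
open ContinuousLinearMap in
lemma min_iff_aux {F : Type*} [NormedAddCommGroup F] [InnerProductSpace ℂ F] [CompleteSpace F]
    (W : F →L[ℂ] F) (hW : W.IsPositive) (K : Submodule ℂ F) (e : F) :
    (∀ v ∈ K, (inner ℂ (W e) e : ℂ).re ≤ (inner ℂ (W (e + v)) (e + v) : ℂ).re) ↔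
      e ∈ (Submodule.map (W : F →ₗ[ℂ] F) K)ᗮ := by
  have hsym : ∀ a b : F, (inner ℂ (W a) b : ℂ) = inner ℂ a (W b) := fun a b => hW.1 a b
  have key : ∀ v : F, (inner ℂ (W (e + v)) (e + v) : ℂ).re =
      (inner ℂ (W e) e : ℂ).re + 2 * (inner ℂ (W e) v : ℂ).re + (inner ℂ (W v) v : ℂ).re := by
    intro v
    have h1 : (inner ℂ (W v) e : ℂ) = starRingEnd ℂ (inner ℂ (W e) v : ℂ) := by
      rw [hsym v e, ← inner_conj_symm]
    simp only [map_add, inner_add_left, inner_add_right, Complex.add_re, h1, Complex.conj_re]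
    ring
  constructor
  · intro h
    have hzero : ∀ v ∈ K, (inner ℂ (W e) v : ℂ) = 0 := by
      have hrzero : ∀ w ∈ K, (inner ℂ (W e) w : ℂ).re = 0 := by
        intro w hw
        set a := (inner ℂ (W e) w : ℂ).re with ha
        set b := (inner ℂ (W w) w : ℂ).re with hb
        have hbnn : 0 ≤ b := by simpa using (Complex.le_def.mp (hW.inner_nonneg_left w)).1
        have hre : ∀ t : ℝ, 0 ≤ b * (t * t) + (2 * a) * t + 0 := by
          intro t
          have hmem := h ((t : ℂ) • w) (K.smul_mem _ hw)
          rw [key] at hmem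
          have h2 : (inner ℂ (W e) ((t : ℂ) • w) : ℂ).re = t * a := by
            rw [inner_smul_right]; simp [ha]
          have h3 : (inner ℂ (W ((t : ℂ) • w)) ((t : ℂ) • w) : ℂ).re = (t * t) * b := by
            rw [map_smul, inner_smul_left, inner_smul_right, hb]
            simp [Complex.mul_re]; ring
          rw [h2, h3] at hmem
          nlinarith [hmem]
        have := discrim_le_zero hre
        rw [discrim] at this
        nlinarith [this]
      intro v hv
      have h1 := hrzero v hv
      have h2 := hrzero ((Complex.I : ℂ) • v) (K.smul_mem _ hv)
      rw [inner_smul_right] at h2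
      simp [Complex.mul_re] at h2
      exact Complex.ext (by simpa using h1) (by simpa using h2)
    intro w hw
    obtain ⟨v, hv, rfl⟩ := hw
    rw [ContinuousLinearMap.coe_coe, hsym v e, ← inner_conj_symm, hzero v hv, map_zero]
  · intro he v hv
    have h0 : (inner ℂ (W e) v : ℂ) = 0 := by
      have h1 : (inner ℂ (W v) e : ℂ) = 0 := he (W v) ⟨v, hv, rfl⟩
      rw [hsym v e, ← inner_conj_symm] at h1
      simpa using congrArg (starRingEnd ℂ) h1
    rw [key, h0]
    simpa using (Complex.le_def.mp (hW.inner_nonneg_left v)).1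
/-- `A z = x` has a `W`-least-squares solution for every `x` iff `R(A) + W(R(A))^⊥ = F`. -/
theorem stmt_1 {H F : Type*} [NormedAddCommGroup H] [InnerProductSpace ℂ H] [CompleteSpace H]
    [NormedAddCommGroup F] [InnerProductSpace ℂ F] [CompleteSpace F]
    [TopologicalSpace.SeparableSpace H] [TopologicalSpace.SeparableSpace F]
    (A : H →L[ℂ] F) (W : F →L[ℂ] F) (hW : W.IsPositive) :
    (∀ x : F, ∃ u : H, ∀ z : H,
        (inner ℂ (W (A u - x)) (A u - x) : ℂ).re ≤ (inner ℂ (W (A z - x)) (A z - x) : ℂ).re) ↔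
      LinearMap.range (A : H →ₗ[ℂ] F) ⊔ (Submodule.map (W : F →ₗ[ℂ] F) (LinearMap.range (A : H →ₗ[ℂ] F)))ᗮ = ⊤ := by
  constructor
  · intro h
    rw [eq_top_iff]
    intro x _
    obtain ⟨u, hu⟩ := h x
    have he : (A u - x) ∈ (Submodule.map (W : F →ₗ[ℂ] F) (LinearMap.range (A : H →ₗ[ℂ] F)))ᗮ := by
      rw [← min_iff_aux W hW]
      rintro v ⟨w, rfl⟩
      have heq : A (u + w) - x = (A u - x) + A w := by rw [map_add]; abel
      have := hu (u + w)
      rwa [heq] at this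
    have hx : x = A u + (-(A u - x)) := by abel
    rw [hx]
    exact Submodule.add_mem_sup (LinearMap.mem_range_self _ u) (neg_mem he)
  · intro h x
    have hx : x ∈ LinearMap.range (A : H →ₗ[ℂ] F) ⊔ (Submodule.map (W : F →ₗ[ℂ] F) (LinearMap.range (A : H →ₗ[ℂ] F)))ᗮ := h ▸ trivial
    obtain ⟨a, ha, s, hs, rfl⟩ := Submodule.mem_sup.mp hx
    obtain ⟨u, rfl⟩ := ha
    refine ⟨u, fun z => ?_⟩
    have he : (A u - (A u + s)) ∈ (Submodule.map (W : F →ₗ[ℂ] F) (LinearMap.range (A : H →ₗ[ℂ] F)))ᗮ := by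
      simpa using neg_mem hs
    have := (min_iff_aux W hW (LinearMap.range (A : H →ₗ[ℂ] F)) _).mpr he (A (z - u))
      (LinearMap.mem_range_self _ _)
    have heq : A u - (A u + s) + A (z - u) = A z - (A u + s) := by
      rw [map_sub]; abel
    rwa [heq] at this
end

section
/- Let A : H → F be bounded and W : F → F positive semidefinite. There exists a bounded operator G : F → H such that Gx is a W-least-squares solution of Az = x for every x ∈ F (a W-inverse of A) if and only if the normal equation A*W(AX − I) = 0 admits a bounded operator solution X ∈ L(F,H). Moreover, the set of W-inverses of A coincides with the set of bounded solutions of this normal equation. -/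
open ContinuousLinearMap

private lemma key_min {H F : Type*} [NormedAddCommGroup H] [InnerProductSpace ℂ H]
    [CompleteSpace H] [NormedAddCommGroup F] [InnerProductSpace ℂ F] [CompleteSpace F]
    (A : H →L[ℂ] F) (W : F →L[ℂ] F) (hW : W.IsPositive) (u : H) (x : F) :
    (∀ z : H, (inner ℂ (W (A u - x)) (A u - x) : ℂ).re ≤
        (inner ℂ (W (A z - x)) (A z - x) : ℂ).re) ↔
      ContinuousLinearMap.adjoint A (W (A u - x)) = 0 := by
  have hswap : ∀ p q : F, (inner ℂ (W p) q : ℂ) = inner ℂ p (W q) := by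
    intro p q
    conv_lhs => rw [← hW.isSelfAdjoint.adjoint_eq]
    rw [ContinuousLinearMap.adjoint_inner_left]
  set e := A u - x with he
  constructor
  · intro hmin
    set v := ContinuousLinearMap.adjoint A (W e) with hv
    by_contra hv0
    have hvn : (0:ℝ) < ‖v‖ := norm_pos_iff.mpr hv0
    have hvpos : (0:ℝ) < ‖v‖ ^ 2 := by positivity
    set c : ℝ := (inner ℂ (W (A v)) (A v) : ℂ).re with hc
    have hc0 : 0 ≤ c := hW.re_inner_nonneg_left (A v)
    set t : ℝ := ‖v‖ ^ 2 / (c + 1) with htdef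
    have ht : 0 < t := div_pos hvpos (by linarith)
    have hmain := hmin (u - (t:ℂ) • v)
    have hAz : A (u - (t:ℂ) • v) - x = e - (t:ℂ) • A v := by
      simp [he, map_sub, map_smul]; abel
    rw [hAz] at hmain
    have hcross : (inner ℂ (W e) (A v) : ℂ) = ((‖v‖ ^ 2 : ℝ) : ℂ) := by
      rw [← ContinuousLinearMap.adjoint_inner_left, ← hv, inner_self_eq_norm_sq_to_K]
      norm_cast
    have hcross2 : (inner ℂ (W (A v)) e : ℂ) = ((‖v‖ ^ 2 : ℝ) : ℂ) := by
      rw [hswap (A v) e, ← inner_conj_symm, hcross]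
      simp
    have hexpC : (inner ℂ (W (e - (t:ℂ) • A v)) (e - (t:ℂ) • A v) : ℂ)
        = inner ℂ (W e) e - ((2 * t * ‖v‖ ^ 2 : ℝ) : ℂ)
          + ((t ^ 2 : ℝ) : ℂ) * inner ℂ (W (A v)) (A v) := by
      simp only [map_sub, map_smul, inner_sub_left, inner_sub_right, inner_smul_left,
        inner_smul_right, hcross, hcross2, Complex.conj_ofReal]
      push_cast
      ring
    have hexp : (inner ℂ (W (e - (t:ℂ) • A v)) (e - (t:ℂ) • A v) : ℂ).re
        = (inner ℂ (W e) e : ℂ).re - 2 * t * ‖v‖ ^ 2 + t ^ 2 * c := by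
      rw [hexpC, Complex.add_re, Complex.sub_re, Complex.ofReal_re, Complex.re_ofReal_mul]
    rw [hexp] at hmain
    have h3 : 2 * t * ‖v‖ ^ 2 ≤ t ^ 2 * c := by linarith
    have h4 : t * (c + 1) = ‖v‖ ^ 2 := by
      rw [htdef]; field_simp
    nlinarith [mul_pos ht hvpos, sq_nonneg t, mul_pos ht ht]
  · intro hz z
    have hAz : A z - x = A (z - u) + e := by
      simp [he, map_sub]
    rw [hAz]
    set a := A (z - u) with ha
    have h1 : (inner ℂ (W e) a : ℂ) = 0 := by
      rw [← ContinuousLinearMap.adjoint_inner_left, hz, inner_zero_left]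
    have h2 : (inner ℂ (W a) e : ℂ) = 0 := by
      rw [hswap a e, ← inner_conj_symm, h1, map_zero]
    have hsum : (inner ℂ (W (a + e)) (a + e) : ℂ) = inner ℂ (W a) a + inner ℂ (W e) e := by
      simp only [map_add, inner_add_left, inner_add_right, h1, h2]
      ring
    rw [hsum, Complex.add_re]
    have hpa : (0:ℝ) ≤ (inner ℂ (W a) a : ℂ).re := hW.re_inner_nonneg_left a
    linarith

/-- `A` admits a `W`-inverse iff the normal equation `A* W (A X - I) = 0` has a bounded
solution; moreover the `W`-inverses are exactly the solutions of the normal equation. -/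
theorem stmt_2 {H F : Type*} [NormedAddCommGroup H] [InnerProductSpace ℂ H] [CompleteSpace H]
    [NormedAddCommGroup F] [InnerProductSpace ℂ F] [CompleteSpace F]
    [TopologicalSpace.SeparableSpace H] [TopologicalSpace.SeparableSpace F]
    (A : H →L[ℂ] F) (W : F →L[ℂ] F) (hW : W.IsPositive) :
    ((∃ G : F →L[ℂ] H, ∀ (x : F) (z : H),
        (inner ℂ (W (A (G x) - x)) (A (G x) - x) : ℂ).re ≤
          (inner ℂ (W (A z - x)) (A z - x) : ℂ).re) ↔
      (∃ X : F →L[ℂ] H,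
        ContinuousLinearMap.adjoint A ∘L (W ∘L (A ∘L X - ContinuousLinearMap.id ℂ F)) = 0)) ∧
    (∀ G : F →L[ℂ] H,
      (∀ (x : F) (z : H),
        (inner ℂ (W (A (G x) - x)) (A (G x) - x) : ℂ).re ≤
          (inner ℂ (W (A z - x)) (A z - x) : ℂ).re) ↔
      ContinuousLinearMap.adjoint A ∘L (W ∘L (A ∘L G - ContinuousLinearMap.id ℂ F)) = 0) := by
  have hG : ∀ G : F →L[ℂ] H,
      (∀ (x : F) (z : H),
        (inner ℂ (W (A (G x) - x)) (A (G x) - x) : ℂ).re ≤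
          (inner ℂ (W (A z - x)) (A z - x) : ℂ).re) ↔
      ContinuousLinearMap.adjoint A ∘L (W ∘L (A ∘L G - ContinuousLinearMap.id ℂ F)) = 0 := by
    intro G
    have hpt : ∀ x : F,
        (∀ z : H, (inner ℂ (W (A (G x) - x)) (A (G x) - x) : ℂ).re ≤
            (inner ℂ (W (A z - x)) (A z - x) : ℂ).re) ↔
          ContinuousLinearMap.adjoint A (W (A (G x) - x)) = 0 :=
      fun x => key_min A W hW (G x) x
    constructor
    · intro h
      ext x
      simpa using (hpt x).mp (h x)
    · intro h x z
      refine (hpt x).mpr ?_ z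
      have := ContinuousLinearMap.ext_iff.mp h x
      simpa using this
  refine ⟨⟨fun ⟨G, hGmin⟩ => ⟨G, (hG G).mp hGmin⟩,
    fun ⟨X, hX⟩ => ⟨X, (hG X).mpr hX⟩⟩, hG⟩
end

section
/- Let A : H → F be bounded and W : F → F positive semidefinite. Then A admits a W-inverse (equivalently, R(A) + W^{-1}(R(A)^⊥) = F) if and only if R(A) + N(W) is a closed subspace of F and F = (R(A)+N(W)) + W((R(A)+N(W)))^⊥ (i.e. the pair (W, R(A)+N(W)) is compatible). -/
local notation "⟪" x ", " y "⟫" => @inner ℂ _ _ x y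

theorem aux_key {F : Type*} [NormedAddCommGroup F] [InnerProductSpace ℂ F]
    (W : F →L[ℂ] F) (hsym : ∀ x y : F, ⟪W x, y⟫ = ⟪x, W y⟫)
    (hpos : ∀ x : F, 0 ≤ (⟪W x, x⟫).re)
    (v s : F) (h : ∀ c : ℂ, (⟪W v, v⟫).re ≤ (⟪W (v + c • s), v + c • s⟫).re) :
    ⟪W v, s⟫ = 0 := by
  set α : ℂ := ⟪W v, s⟫ with hα
  have hsv : ⟪W s, v⟫ = (starRingEnd ℂ) α := by
    rw [hα, hsym v s, inner_conj_symm]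
  have expand : ∀ c : ℂ, (⟪W (v + c • s), v + c • s⟫).re
      = (⟪W v, v⟫).re + 2 * (c * α).re + Complex.normSq c * (⟪W s, s⟫).re := by
    intro c
    have e : ⟪W (v + c • s), v + c • s⟫
        = ⟪W v, v⟫ + (c * α + (starRingEnd ℂ) (c * α)) + ((starRingEnd ℂ) c * c) * ⟪W s, s⟫ := by
      rw [map_add, map_smul, inner_add_left, inner_add_right, inner_add_right,
        inner_smul_left, inner_smul_right, inner_smul_left, inner_smul_right, hsv, map_mul]
      ring
    rw [e]
    have h2 : (((starRingEnd ℂ) c * c) * ⟪W s, s⟫).re = Complex.normSq c * (⟪W s, s⟫).re := by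
      rw [← Complex.normSq_eq_conj_mul_self]
      exact Complex.re_ofReal_mul _ _
    simp only [Complex.add_re, h2, Complex.conj_re]
    ring
  set β : ℝ := (⟪W s, s⟫).re with hβ
  have hβ0 : 0 ≤ β := hpos s
  set t : ℝ := (β + 1)⁻¹ with ht
  have ht0 : 0 < t := by positivity
  have htb : t * (β + 1) = 1 := by
    rw [ht]; field_simp
  set c₀ : ℂ := -(t : ℂ) * (starRingEnd ℂ) α with hc₀
  have h1 : (c₀ * α).re = -(t * Complex.normSq α) := by
    have e : c₀ * α = -(t : ℂ) * (Complex.normSq α : ℂ) := by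
      rw [hc₀, mul_assoc, Complex.normSq_eq_conj_mul_self]
    rw [e, neg_mul, ← Complex.ofReal_mul, Complex.neg_re, Complex.ofReal_re]
  have h2 : Complex.normSq c₀ = t ^ 2 * Complex.normSq α := by
    rw [hc₀, Complex.normSq_mul, Complex.normSq_neg, Complex.normSq_ofReal, Complex.normSq_conj]
    ring
  have hin := h c₀
  rw [expand c₀, h1, h2] at hin
  have hq : Complex.normSq α = 0 := by
    by_contra hne
    have hq' : 0 < Complex.normSq α := lt_of_le_of_ne (Complex.normSq_nonneg α) (Ne.symm hne)
    have htb' : t * β + t = 1 := by linear_combination htb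
    have e1 : t ^ 2 * Complex.normSq α * β = t * Complex.normSq α - t ^ 2 * Complex.normSq α := by
      linear_combination (t * Complex.normSq α) * htb'
    nlinarith [hin, mul_pos ht0 hq', mul_pos (mul_pos ht0 ht0) hq']
  exact Complex.normSq_eq_zero.mp hq

theorem aux_zero {F : Type*} [NormedAddCommGroup F] [InnerProductSpace ℂ F]
    (W : F →L[ℂ] F) (hsym : ∀ x y : F, ⟪W x, y⟫ = ⟪x, W y⟫)
    (hpos : ∀ x : F, 0 ≤ (⟪W x, x⟫).re)
    (v : F) (h0 : (⟪W v, v⟫).re = 0) : W v = 0 := by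
  have := aux_key W hsym hpos v (W v) (fun c => by rw [h0]; exact hpos _)
  exact inner_self_eq_zero.mp this

/-- `A` admits a `W`-inverse iff `R(A) + N(W)` is closed and the pair `(W, R(A)+N(W))` is
compatible. -/
theorem stmt_4 {H F : Type*} [NormedAddCommGroup H] [InnerProductSpace ℂ H] [CompleteSpace H]
    [NormedAddCommGroup F] [InnerProductSpace ℂ F] [CompleteSpace F]
    [TopologicalSpace.SeparableSpace H] [TopologicalSpace.SeparableSpace F]
    (A : H →L[ℂ] F) (W : F →L[ℂ] F) (hW : W.IsPositive) :
    (∃ G : F →L[ℂ] H, ∀ (x : F) (z : H),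
        (inner ℂ (W (A (G x) - x)) (A (G x) - x) : ℂ).re ≤
          (inner ℂ (W (A z - x)) (A z - x) : ℂ).re) ↔
      (IsClosed ((LinearMap.range (A : H →ₗ[ℂ] F) ⊔ LinearMap.ker (W : F →ₗ[ℂ] F) : Submodule ℂ F) : Set F) ∧
        (LinearMap.range (A : H →ₗ[ℂ] F) ⊔ LinearMap.ker (W : F →ₗ[ℂ] F)) ⊔
          (Submodule.map (W : F →ₗ[ℂ] F) (LinearMap.range (A : H →ₗ[ℂ] F) ⊔ LinearMap.ker (W : F →ₗ[ℂ] F)))ᗮ = ⊤) := by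
  classical
  have hsym : ∀ x y : F, ⟪W x, y⟫ = ⟪x, W y⟫ := fun x y => hW.1 x y
  have hpos : ∀ x : F, 0 ≤ (⟪W x, x⟫).re := by
    intro x
    exact (Complex.nonneg_iff.mp (hW.inner_nonneg_left x)).1
  set S : Submodule ℂ F := LinearMap.range (A : H →ₗ[ℂ] F) with hS
  set N : Submodule ℂ F := LinearMap.ker (W : F →ₗ[ℂ] F) with hN
  set T : Submodule ℂ F := (Submodule.map (W : F →ₗ[ℂ] F) S)ᗮ with hT
  have hmemT : ∀ {v : F}, v ∈ T → ∀ u ∈ S, ⟪W u, v⟫ = 0 := by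
    intro v hv u hu
    exact (Submodule.mem_orthogonal _ _).mp hv (W u) ⟨u, hu, rfl⟩
  have hNT : N ≤ T := by
    intro n hn
    rw [hT, Submodule.mem_orthogonal]
    rintro u ⟨s, hs, rfl⟩
    have hWn : W n = 0 := hn
    show ⟪W s, n⟫ = 0
    rw [hsym, hWn, inner_zero_right]
  have hmap : Submodule.map (W : F →ₗ[ℂ] F) (S ⊔ N) = Submodule.map (W : F →ₗ[ℂ] F) S := by
    rw [Submodule.map_sup]
    suffices h : Submodule.map (W : F →ₗ[ℂ] F) N = ⊥ by rw [h, sup_bot_eq]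
    rw [Submodule.eq_bot_iff]
    rintro x ⟨n, hn, rfl⟩
    exact hn
  have hsup : ((S ⊔ N) ⊔ T : Submodule ℂ F) = S ⊔ T := by
    rw [sup_assoc, sup_eq_right.mpr hNT]
  -- Forward: a W-inverse gives the decomposition
  have fwd : (∃ G : F →L[ℂ] H, ∀ (x : F) (z : H),
        (inner ℂ (W (A (G x) - x)) (A (G x) - x) : ℂ).re ≤
          (inner ℂ (W (A z - x)) (A z - x) : ℂ).re) → S ⊔ T = ⊤ := by
    rintro ⟨G, hG⟩
    rw [Submodule.eq_top_iff']
    intro x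
    have hvT : A (G x) - x ∈ T := by
      rw [hT, Submodule.mem_orthogonal]
      rintro u ⟨y, ⟨z₀, rfl⟩, rfl⟩
      have hkey : ⟪W (A (G x) - x), A z₀⟫ = 0 := by
        apply aux_key W hsym hpos
        intro c
        have h1 := hG x (G x + c • z₀)
        have e : A (G x + c • z₀) - x = (A (G x) - x) + c • A z₀ := by
          rw [map_add, map_smul]; abel
        rwa [e] at h1
      have h2 : ⟪A (G x) - x, W (A z₀)⟫ = 0 := by rw [← hsym]; exact hkey
      show ⟪W (A z₀), A (G x) - x⟫ = 0
      rw [← inner_conj_symm, h2, map_zero]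
    have h1 : A (G x) ∈ S ⊔ T := Submodule.mem_sup_left ⟨G x, rfl⟩
    have h2 : A (G x) - x ∈ S ⊔ T := Submodule.mem_sup_right hvT
    have e : x = A (G x) - (A (G x) - x) := by abel
    rw [e]
    exact Submodule.sub_mem _ h1 h2
  -- The decomposition implies S ⊔ N is closed
  have hclosed : S ⊔ T = ⊤ → IsClosed ((S ⊔ N : Submodule ℂ F) : Set F) := by
    intro hST
    apply isClosed_of_closure_subset
    intro x hx
    have hx' : x ∈ (S ⊔ N).topologicalClosure := by
      rw [← SetLike.mem_coe, Submodule.topologicalClosure_coe]; exact hx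
    obtain ⟨s, hs, t, htT, hst⟩ :=
      Submodule.mem_sup.mp (show x ∈ S ⊔ T by rw [hST]; trivial)
    have htM : t ∈ (S ⊔ N).topologicalClosure := by
      have hsM : s ∈ (S ⊔ N).topologicalClosure :=
        Submodule.le_topologicalClosure _ (Submodule.mem_sup_left hs)
      have e : t = x - s := by rw [← hst]; abel
      rw [e]
      exact Submodule.sub_mem _ hx' hsM
    have hWt : W t = 0 := by
      apply aux_zero W hsym hpos
      have horthM : ∀ u ∈ (S ⊔ N : Submodule ℂ F), ⟪u, W t⟫ = 0 := by
        intro u hu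
        obtain ⟨a, haS, n, hnN, rfl⟩ := Submodule.mem_sup.mp hu
        have e1 : ⟪a, W t⟫ = 0 := by
          rw [← hsym]
          exact hmemT htT a haS
        have e2 : ⟪n, W t⟫ = 0 := by
          have hWn : W n = 0 := hnN
          rw [← hsym, hWn, inner_zero_left]
        rw [inner_add_left, e1, e2, add_zero]
      have hQt : ⟪t, W t⟫ = 0 := by
        have hclosedset : IsClosed {u : F | ⟪u, W t⟫ = (0 : ℂ)} :=
          isClosed_eq (continuous_id.inner continuous_const) continuous_const
        have hsubset : ((S ⊔ N : Submodule ℂ F) : Set F) ⊆ {u : F | ⟪u, W t⟫ = (0 : ℂ)} :=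
          fun u hu => horthM u hu
        have hcc := hclosedset.closure_subset_iff.mpr hsubset
        have htc : t ∈ closure ((S ⊔ N : Submodule ℂ F) : Set F) := by
          rw [← Submodule.topologicalClosure_coe]; exact htM
        exact hcc htc
      have e : ⟪W t, t⟫ = 0 := by
        rw [← inner_conj_symm, hQt, map_zero]
      rw [e, Complex.zero_re]
    rw [← hst]
    exact Submodule.add_mem _ (Submodule.mem_sup_left hs)
      (Submodule.mem_sup_right (by exact hWt))
  -- Backward: the decomposition gives a W-inverse
  have bwd : S ⊔ T = ⊤ → (∃ G : F →L[ℂ] H, ∀ (x : F) (z : H),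
        (inner ℂ (W (A (G x) - x)) (A (G x) - x) : ℂ).re ≤
          (inner ℂ (W (A z - x)) (A z - x) : ℂ).re) := by
    intro hST
    haveI hTc : CompleteSpace ↥T := (Submodule.isClosed_orthogonal _).completeSpace_coe
    let e0 : WithLp 2 (H × ↥T) ≃L[ℂ] H × ↥T := WithLp.prodContinuousLinearEquiv 2 ℂ H ↥T
    let D : WithLp 2 (H × ↥T) →L[ℂ] F :=
      (A.comp (ContinuousLinearMap.fst ℂ H ↥T) +
        (Submodule.subtypeL T).comp (ContinuousLinearMap.snd ℂ H ↥T)).comp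
        (e0 : WithLp 2 (H × ↥T) →L[ℂ] H × ↥T)
    have hD : ∀ w, D w = A (e0 w).1 + ((e0 w).2 : F) := fun w => rfl
    have hDsurj : LinearMap.range (D : WithLp 2 (H × ↥T) →ₗ[ℂ] F) = ⊤ := by
      rw [LinearMap.range_eq_top]
      intro y
      obtain ⟨a, haS, b, hbT, hab⟩ :=
        Submodule.mem_sup.mp (show y ∈ S ⊔ T by rw [hST]; trivial)
      obtain ⟨z, rfl⟩ := haS
      refine ⟨e0.symm (z, ⟨b, hbT⟩), ?_⟩
      rw [ContinuousLinearMap.coe_coe, hD, e0.apply_symm_apply]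
      exact hab
    set K : Submodule ℂ (WithLp 2 (H × ↥T)) := LinearMap.ker (D : WithLp 2 (H × ↥T) →ₗ[ℂ] F) with hK
    haveI : CompleteSpace ↥K := (ContinuousLinearMap.isClosed_ker D).completeSpace_coe
    haveI : CompleteSpace ↥Kᗮ := (Submodule.isClosed_orthogonal _).completeSpace_coe
    let D0 : ↥Kᗮ →L[ℂ] F := D.comp Kᗮ.subtypeL
    have hinj : LinearMap.ker (D0 : ↥Kᗮ →ₗ[ℂ] F) = ⊥ := by
      rw [LinearMap.ker_eq_bot']
      intro w hw
      have hwK : (w : WithLp 2 (H × ↥T)) ∈ K ⊓ Kᗮ := ⟨hw, w.2⟩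
      have h0 : (w : WithLp 2 (H × ↥T)) ∈ (⊥ : Submodule ℂ (WithLp 2 (H × ↥T))) :=
        (Submodule.orthogonal_disjoint K).le_bot hwK
      exact Subtype.ext (Submodule.mem_bot _ |>.mp h0)
    have hsurj : LinearMap.range (D0 : ↥Kᗮ →ₗ[ℂ] F) = ⊤ := by
      rw [LinearMap.range_eq_top]
      intro y
      obtain ⟨w, hw⟩ := LinearMap.range_eq_top.mp hDsurj y
      obtain ⟨k, hk, k', hk', hkk⟩ := Submodule.mem_sup.mp
        (show w ∈ K ⊔ Kᗮ by rw [Submodule.sup_orthogonal_of_hasOrthogonalProjection]; trivial)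
      refine ⟨⟨k', hk'⟩, ?_⟩
      show D k' = y
      have hDk : D k = 0 := hk
      have e : k' = w - k := by rw [← hkk]; abel
      rw [e, map_sub, hDk, ← ContinuousLinearMap.coe_coe D, hw, sub_zero]
    let eqv := ContinuousLinearEquiv.ofBijective D0 hinj hsurj
    refine ⟨(ContinuousLinearMap.fst ℂ H ↥T).comp
      ((e0 : WithLp 2 (H × ↥T) →L[ℂ] H × ↥T).comp
        (Kᗮ.subtypeL.comp (eqv.symm : F →L[ℂ] ↥Kᗮ))), ?_⟩
    intro x z
    set w : WithLp 2 (H × ↥T) := ((eqv.symm x : ↥Kᗮ) : WithLp 2 (H × ↥T)) with hw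
    have hDw : D w = x := eqv.apply_symm_apply x
    have hGx : A (((ContinuousLinearMap.fst ℂ H ↥T).comp
      ((e0 : WithLp 2 (H × ↥T) →L[ℂ] H × ↥T).comp
        (Kᗮ.subtypeL.comp (eqv.symm : F →L[ℂ] ↥Kᗮ)))) x) = x - ((e0 w).2 : F) := by
      have e1 : (((ContinuousLinearMap.fst ℂ H ↥T).comp
        ((e0 : WithLp 2 (H × ↥T) →L[ℂ] H × ↥T).comp
          (Kᗮ.subtypeL.comp (eqv.symm : F →L[ℂ] ↥Kᗮ)))) x) = (e0 w).1 := rfl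
      rw [e1]
      have := hD w
      rw [hDw] at this
      rw [eq_sub_iff_add_eq, ← this]
    set g : H := (((ContinuousLinearMap.fst ℂ H ↥T).comp
      ((e0 : WithLp 2 (H × ↥T) →L[ℂ] H × ↥T).comp
        (Kᗮ.subtypeL.comp (eqv.symm : F →L[ℂ] ↥Kᗮ)))) x) with hg
    have hvT : A g - x ∈ T := by
      rw [hGx]
      have : x - ((e0 w).2 : F) - x = -((e0 w).2 : F) := by abel
      rw [this]
      exact Submodule.neg_mem _ (e0 w).2.2
    set u : F := A z - A g with hu
    set v : F := A g - x with hv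
    have huS : u ∈ S := by
      rw [hu, ← map_sub]
      exact ⟨z - g, rfl⟩
    have hc1 : ⟪W u, v⟫ = 0 := hmemT hvT u huS
    have hc2 : ⟪W v, u⟫ = 0 := by
      rw [hsym, ← inner_conj_symm, hc1, map_zero]
    have e : A z - x = u + v := by rw [hu, hv]; abel
    rw [e]
    have e2 : ⟪W (u + v), u + v⟫ = ⟪W u, u⟫ + ⟪W v, v⟫ := by
      rw [map_add, inner_add_left, inner_add_right, inner_add_right, hc1, hc2]
      ring
    rw [e2, Complex.add_re]
    have := hpos u
    linarith
  constructor
  · intro hLHS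
    have hST := fwd hLHS
    refine ⟨hclosed hST, ?_⟩
    rw [hmap, hsup]
    exact hST
  · rintro ⟨-, htop⟩
    apply bwd
    rw [hmap, hsup] at htop
    exact htop
end

section
/- Let A : H → F be bounded and W : F → F positive semidefinite such that F = R(A) + W(R(A))^⊥ (i.e. A admits a W-inverse). Then R(A) is closed if and only if R(A) ∩ N(W) is closed. -/
set_option synthInstance.maxHeartbeats 1000000
set_option maxHeartbeats 2000000

open ContinuousLinearMap in
/-- A positive operator with `⟪W x, x⟫ = 0` kills `x`. -/
lemma aux_pos_inner_self_zero {F : Type*} [NormedAddCommGroup F] [InnerProductSpace ℂ F]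
    [CompleteSpace F] (W : F →L[ℂ] F) (hW : W.IsPositive) (x : F)
    (hx : inner ℂ (W x) x = (0:ℂ)) : W x = 0 := by
  have h0 : (0:F →L[ℂ] F) ≤ W := (nonneg_iff_isPositive W).mpr hW
  have hs : CFC.sqrt W * CFC.sqrt W = W := CFC.sqrt_mul_sqrt_self W h0
  have hsa : IsSelfAdjoint (CFC.sqrt W) :=
    ((nonneg_iff_isPositive _).mp (CFC.sqrt_nonneg (a := W))).isSelfAdjoint
  have key : CFC.sqrt W (CFC.sqrt W x) = W x := by
    conv_rhs => rw [← hs]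
    rw [ContinuousLinearMap.mul_apply]
  have h1 : CFC.sqrt W x = 0 := by
    have h2 : inner ℂ (CFC.sqrt W x) (CFC.sqrt W x) = (0:ℂ) := by
      rw [← ContinuousLinearMap.adjoint_inner_left, hsa.adjoint_eq, key, hx]
    exact inner_self_eq_zero.mp h2
  rw [← key, h1, map_zero]

/-- If `A` admits a `W`-inverse (`R(A) + W(R(A))^⊥ = F`), then `R(A)` is closed iff
`R(A) ∩ N(W)` is closed. -/
theorem stmt_5 {H F : Type*} [NormedAddCommGroup H] [InnerProductSpace ℂ H] [CompleteSpace H]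
    [NormedAddCommGroup F] [InnerProductSpace ℂ F] [CompleteSpace F]
    [TopologicalSpace.SeparableSpace H] [TopologicalSpace.SeparableSpace F]
    (A : H →L[ℂ] F) (W : F →L[ℂ] F) (hW : W.IsPositive)
    (h : LinearMap.range (A : H →ₗ[ℂ] F) ⊔ (Submodule.map (W : F →ₗ[ℂ] F) (LinearMap.range (A : H →ₗ[ℂ] F)))ᗮ = ⊤) :
    IsClosed ((LinearMap.range (A : H →ₗ[ℂ] F) : Submodule ℂ F) : Set F) ↔
      IsClosed ((LinearMap.range (A : H →ₗ[ℂ] F) ⊓ LinearMap.ker (W : F →ₗ[ℂ] F) : Submodule ℂ F) : Set F) := by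
  set M : Submodule ℂ F := LinearMap.range (A : H →ₗ[ℂ] F) with hM
  set N : Submodule ℂ F := (Submodule.map (W : F →ₗ[ℂ] F) M)ᗮ with hN
  set K₀ : Submodule ℂ F := M ⊓ LinearMap.ker (W : F →ₗ[ℂ] F) with hK₀
  -- membership characterizations
  have hMN : ∀ x ∈ M, x ∈ N → W x = 0 := by
    intro x hx hxN
    refine aux_pos_inner_self_zero W hW x ?_
    exact (Submodule.mem_orthogonal _ x).mp hxN (W x) ⟨x, hx, rfl⟩
  have hNK : ∀ x : F, W x = 0 → x ∈ N := by
    intro x hx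
    rw [Submodule.mem_orthogonal]
    rintro u ⟨m, hm, rfl⟩
    have : inner ℂ ((ContinuousLinearMap.adjoint W) m) x = inner ℂ m (W x) :=
      ContinuousLinearMap.adjoint_inner_left W x m
    rw [hW.isSelfAdjoint.adjoint_eq] at this
    rw [ContinuousLinearMap.coe_coe, this, hx, inner_zero_right]
  constructor
  · intro hMc
    have : ((K₀ : Submodule ℂ F) : Set F) = (M : Set F) ∩ (LinearMap.ker (W : F →ₗ[ℂ] F) : Set F) := rfl
    rw [this]
    exact hMc.inter (ContinuousLinearMap.isClosed_ker W)
  · intro hKc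
    haveI : CompleteSpace K₀ := hKc.completeSpace_coe
    haveI hNcs : CompleteSpace N := (Submodule.map (W : F →ₗ[ℂ] F) M).isClosed_orthogonal.completeSpace_coe
    haveI : CompleteSpace ↥(Nᗮ) := N.isClosed_orthogonal.completeSpace_coe
    -- the projection composed with A
    set C : H →L[ℂ] ↥(Nᗮ) := (Submodule.orthogonalProjection Nᗮ).comp A with hC
    set G : Submodule ℂ H := LinearMap.ker (C : H →ₗ[ℂ] ↥(Nᗮ)) with hG
    haveI : CompleteSpace G := (ContinuousLinearMap.isClosed_ker C).completeSpace_coe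
    haveI : CompleteSpace ↥(Gᗮ) := G.isClosed_orthogonal.completeSpace_coe
    set C₀ : ↥(Gᗮ) →L[ℂ] ↥(Nᗮ) := C.comp Gᗮ.subtypeL with hC₀
    have projN_zero : ∀ x : F, x ∈ N → Submodule.orthogonalProjection Nᗮ x = 0 := fun x hx =>
      Submodule.orthogonalProjectionOnto_apply_of_mem_orthogonal
        (N.le_orthogonal_orthogonal hx)
    have hker : LinearMap.ker (C₀ : ↥(Gᗮ) →ₗ[ℂ] ↥(Nᗮ)) = ⊥ := by
      rw [Submodule.eq_bot_iff]
      rintro ⟨x, hxG'⟩ hx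
      have hxG : x ∈ G := hx
      have hx0 : x = 0 :=
        inner_self_eq_zero.mp ((Submodule.mem_orthogonal G x).mp hxG' x hxG)
      simpa [Subtype.ext_iff] using hx0
    have hrange : LinearMap.range (C₀ : ↥(Gᗮ) →ₗ[ℂ] ↥(Nᗮ)) = ⊤ := by
      rw [Submodule.eq_top_iff']
      intro ξ
      have hξ : (ξ : F) ∈ M ⊔ N := by rw [h]; trivial
      rcases Submodule.mem_sup.mp hξ with ⟨m, hm, n, hn, hmn⟩
      rcases hm with ⟨hm, rfl⟩
      have hCm : C hm = ξ := by
        have h1 : Submodule.orthogonalProjection Nᗮ (A hm) =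
            Submodule.orthogonalProjection Nᗮ ((ξ : F)) - Submodule.orthogonalProjection Nᗮ n := by
          rw [← map_sub]; congr 1; rw [← hmn]; abel
        have h2 : Submodule.orthogonalProjection Nᗮ ((ξ : F)) = ξ :=
          Submodule.orthogonalProjectionOnto_mem_subspace_eq_self ξ
        have h3 := projN_zero n hn
        rw [hC]; simp only [ContinuousLinearMap.comp_apply]
        rw [h1, h2, h3, sub_zero]
      have hsup : hm ∈ G ⊔ Gᗮ := by
        rw [Submodule.sup_orthogonal_of_hasOrthogonalProjection]; trivial
      rcases Submodule.mem_sup.mp hsup with ⟨g, hg, g', hg', hgg'⟩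
      refine ⟨⟨g', hg'⟩, ?_⟩
      have : C g = 0 := hg
      have hCg' : C g' = ξ := by
        have : C hm = C g + C g' := by rw [← map_add, hgg']
        rw [hCm, show C g = 0 from hg] at this
        rw [zero_add] at this
        exact this.symm
      exact hCg'
    set E := ContinuousLinearEquiv.ofBijective C₀ hker hrange with hE
    set D : ↥(Nᗮ) →L[ℂ] F :=
      (A.comp Gᗮ.subtypeL).comp (E.symm : ↥(Nᗮ) →L[ℂ] ↥(Gᗮ)) with hD
    have hDapp : ∀ ξ : ↥(Nᗮ), D ξ = A ((E.symm ξ : ↥(Gᗮ)) : H) := fun ξ => rfl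
    have hprojD : ∀ ξ : ↥(Nᗮ), Submodule.orthogonalProjection Nᗮ (D ξ) = ξ := by
      intro ξ
      have h1 : Submodule.orthogonalProjection Nᗮ (D ξ) = C₀ (E.symm ξ) := rfl
      have h2 : C₀ (E.symm ξ) = E (E.symm ξ) := rfl
      rw [h1, h2, E.apply_symm_apply]
    -- the "sum" operator
    set S : (↥(Nᗮ) × ↥K₀) →L[ℂ] F :=
      D.comp (ContinuousLinearMap.fst ℂ _ _) +
        K₀.subtypeL.comp (ContinuousLinearMap.snd ℂ _ _) with hS
    have hSapp : ∀ p : ↥(Nᗮ) × ↥K₀, S p = D p.1 + (p.2 : F) := fun p => rfl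
    have hprojS : ∀ p : ↥(Nᗮ) × ↥K₀, Submodule.orthogonalProjection Nᗮ (S p) = p.1 := by
      intro p
      rw [hSapp, map_add, hprojD, projN_zero (p.2 : F) (hNK _ p.2.2.2), add_zero]
    have hbound : ∀ p : ↥(Nᗮ) × ↥K₀, ‖p‖ ≤ (‖D‖ + 1 + 1) * ‖S p‖ := by
      intro p
      have hp1 : ‖p.1‖ ≤ ‖S p‖ := by
        calc ‖p.1‖ = ‖Submodule.orthogonalProjection Nᗮ (S p)‖ := by rw [hprojS]
        _ ≤ ‖Submodule.orthogonalProjection Nᗮ‖ * ‖S p‖ := (Submodule.orthogonalProjection Nᗮ).le_opNorm _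
        _ ≤ 1 * ‖S p‖ :=
            mul_le_mul_of_nonneg_right (Submodule.orthogonalProjectionOnto_norm_le Nᗮ) (norm_nonneg _)
        _ = ‖S p‖ := one_mul _
      have hD0 : (0:ℝ) ≤ ‖D‖ := ContinuousLinearMap.opNorm_nonneg D
      have hp2 : ‖p.2‖ ≤ (‖D‖ + 1) * ‖S p‖ := by
        have : (p.2 : F) = S p - D p.1 := by rw [hSapp]; abel
        calc ‖p.2‖ = ‖(p.2 : F)‖ := rfl
        _ = ‖S p - D p.1‖ := by rw [this]
        _ ≤ ‖S p‖ + ‖D p.1‖ := norm_sub_le _ _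
        _ ≤ ‖S p‖ + ‖D‖ * ‖p.1‖ := by linarith [D.le_opNorm p.1]
        _ ≤ ‖S p‖ + ‖D‖ * ‖S p‖ := by nlinarith
        _ = (‖D‖ + 1) * ‖S p‖ := by ring
      have hnp : ‖p‖ = max ‖p.1‖ ‖p.2‖ := rfl
      rw [hnp]
      have h0 : (0:ℝ) ≤ ‖S p‖ := norm_nonneg _
      rcases max_cases ‖p.1‖ ‖p.2‖ with ⟨heq, _⟩ | ⟨heq, _⟩ <;> rw [heq] <;> nlinarith
    have hanti : AntilipschitzWith (‖D‖₊ + 1 + 1) S := by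
      refine S.antilipschitz_of_bound (K := ‖D‖₊ + 1 + 1) ?_
      intro x
      have := hbound x
      push_cast
      exact this
    have hclosed : IsClosed (Set.range S) :=
      hanti.isClosed_range S.uniformContinuous
    have hrangeS : Set.range S = (M : Set F) := by
      apply Set.eq_of_subset_of_subset
      · rintro x ⟨p, rfl⟩
        rw [hSapp]
        exact M.add_mem ⟨_, rfl⟩ p.2.2.1
      · rintro x ⟨hm, rfl⟩
        have hsup : hm ∈ G ⊔ Gᗮ := by
          rw [Submodule.sup_orthogonal_of_hasOrthogonalProjection]; trivial
        rcases Submodule.mem_sup.mp hsup with ⟨g, hg, g', hg', hgg'⟩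
        have hAgN : A g ∈ N := by
          have : C g = 0 := hg
          have h0 : Submodule.orthogonalProjection Nᗮ (A g) = 0 := this
          have := Submodule.orthogonalProjectionOnto_eq_zero_iff.mp h0
          rwa [Submodule.orthogonal_orthogonal] at this
        have hAgK : A g ∈ K₀ := ⟨⟨g, rfl⟩, hMN _ ⟨g, rfl⟩ hAgN⟩
        refine ⟨(E ⟨g', hg'⟩, ⟨A g, hAgK⟩), ?_⟩
        rw [hSapp]
        simp only
        rw [hDapp, E.symm_apply_apply]
        rw [← map_add]
        rw [ContinuousLinearMap.coe_coe]; congr 1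
        show (g' : H) + g = hm
        rw [add_comm]
        exact hgg'
    rw [← hrangeS]
    exact hclosed
end

section
/- Let W : F → F be positive semidefinite, S ⊆ F a closed subspace, and suppose there exists a bounded projection Q (Q² = Q) with range S satisfying WQ = Q*W. Then F = S + S^{⊥_W}, where S^{⊥_W} = { x : ⟨Wx, s⟩ = 0 for all s ∈ S }. Conversely, if F = S + S^{⊥_W}, such a projection Q exists. -/
/-- Compatibility of `(W, S)`: there is a bounded idempotent `Q` with range `S` and
`W Q = Q* W` iff `F = S + S^{⊥_W}`. -/
theorem stmt_8 {F : Type*} [NormedAddCommGroup F] [InnerProductSpace ℂ F] [CompleteSpace F]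
    (W : F →L[ℂ] F) (hW : W.IsPositive) (S : Submodule ℂ F) (hS : IsClosed (S : Set F)) :
    (∃ Q : F →L[ℂ] F, Q ∘L Q = Q ∧ LinearMap.range (Q : F →ₗ[ℂ] F) = S ∧
        W ∘L Q = ContinuousLinearMap.adjoint Q ∘L W) ↔
      S ⊔ (Submodule.map (W : F →ₗ[ℂ] F) S)ᗮ = ⊤ := by
  have hWsa : ContinuousLinearMap.adjoint W = W := hW.1.clm_adjoint_eq
  constructor
  · rintro ⟨Q, hQ2, hQr, hQW⟩
    rw [eq_top_iff]
    intro x _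
    have hfix : ∀ s ∈ S, Q s = s := by
      intro s hs
      rw [← hQr] at hs
      obtain ⟨t, rfl⟩ := hs
      have := congrArg (fun T => T t) hQ2
      simpa using this
    have hx : x = Q x + (x - Q x) := by abel
    rw [hx]
    refine Submodule.add_mem_sup ?_ ?_
    · rw [← hQr]; exact ⟨x, rfl⟩
    · rw [Submodule.mem_orthogonal]
      rintro u ⟨s, hs, rfl⟩
      have h1 : W (Q s) = ContinuousLinearMap.adjoint Q (W s) := by
        have := congrArg (fun T => T s) hQW
        simpa using this
      calc inner ℂ (W s) (x - Q x)
          = inner ℂ (W (Q s)) (x - Q x) := by rw [hfix s hs]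
        _ = inner ℂ (ContinuousLinearMap.adjoint Q (W s)) (x - Q x) := by rw [h1]
        _ = inner ℂ (W s) (Q (x - Q x)) := ContinuousLinearMap.adjoint_inner_left Q _ _
        _ = (0 : ℂ) := by
            have : Q (x - Q x) = 0 := by
              have := congrArg (fun T => T x) hQ2
              simp only [ContinuousLinearMap.comp_apply] at this
              simp [map_sub, this]
            rw [this, inner_zero_right]
  · intro htop
    set T : Submodule ℂ F := (Submodule.map (W : F →ₗ[ℂ] F) S)ᗮ with hT
    set N : Submodule ℂ F := S ⊓ T with hN
    set K : Submodule ℂ F := T ⊓ Nᗮ with hKdef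
    have hNclosed : IsClosed (N : Set F) := by
      rw [hN, Submodule.coe_inf]
      exact hS.inter (Submodule.map (W : F →ₗ[ℂ] F) S).isClosed_orthogonal
    haveI : CompleteSpace N := hNclosed.completeSpace_coe
    have hKclosed : IsClosed (K : Set F) := by
      rw [hKdef, Submodule.coe_inf]
      exact (Submodule.map (W : F →ₗ[ℂ] F) S).isClosed_orthogonal.inter N.isClosed_orthogonal
    have hdis : Disjoint S K := by
      rw [disjoint_iff, eq_bot_iff]
      intro x hx
      have hxS : x ∈ S := hx.1
      have hxK : x ∈ K := hx.2
      have hxT : x ∈ T := (Submodule.mem_inf.mp hxK).1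
      have hxN : x ∈ Nᗮ := (Submodule.mem_inf.mp hxK).2
      have hxInN : x ∈ N := Submodule.mem_inf.mpr ⟨hxS, hxT⟩
      have : x ∈ N ⊓ Nᗮ := ⟨hxInN, hxN⟩
      rw [N.inf_orthogonal_eq_bot] at this
      exact this
    have hTle : T ≤ S ⊔ K := by
      intro x hx
      obtain ⟨n, hn, m, hm, hxnm⟩ := N.exists_add_mem_mem_orthogonal x
      have hnS : n ∈ S := hn.1
      have hmT : m ∈ T := by
        have : m = x - n := by rw [hxnm]; abel
        rw [this]
        exact T.sub_mem hx hn.2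
      have : x = n + m := hxnm
      rw [this]
      exact Submodule.add_mem_sup hnS ((Submodule.mem_inf.mpr ⟨hmT, hm⟩ : m ∈ K))
    have hcompl : IsCompl S K := by
      refine ⟨hdis, codisjoint_iff.2 ?_⟩
      rw [eq_top_iff, ← htop]
      exact sup_le le_sup_left (le_trans hTle (by simp))
    set P := S.linearProjOfClosedCompl K hcompl hS hKclosed with hP
    set Q : F →L[ℂ] F := S.subtypeL ∘L P with hQdef
    have hQmem : ∀ x, Q x ∈ S := fun x => (P x).2
    have hQleft : ∀ s ∈ S, Q s = s := by
      intro s hs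
      show (S.subtypeL (P s) : F) = s
      have : P s = S.projectionOnto K hcompl s := by
        rw [hP, Submodule.coe_continuous_linearProjOfClosedCompl']
      rw [this]
      exact congrArg Subtype.val (Submodule.linearProjOfIsCompl_apply_left hcompl ⟨s, hs⟩)
    have hQright : ∀ k ∈ K, Q k = 0 := by
      intro k hk
      show (S.subtypeL (P k) : F) = 0
      have : P k = S.projectionOnto K hcompl k := by
        rw [hP, Submodule.coe_continuous_linearProjOfClosedCompl']
      rw [this]
      simp [Submodule.projectionOnto_apply_of_mem_right hcompl hk]
    refine ⟨Q, ?_, ?_, ?_⟩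
    · ext x
      exact hQleft (Q x) (hQmem x)
    · apply le_antisymm
      · rintro y ⟨x, rfl⟩
        exact hQmem x
      · intro s hs
        exact ⟨s, hQleft s hs⟩
    · ext x
      simp only [ContinuousLinearMap.comp_apply]
      apply ext_inner_right ℂ
      intro y
      rw [ContinuousLinearMap.adjoint_inner_left]
      obtain ⟨s, hs, k, hk, rfl⟩ := Submodule.mem_sup.1
        (by rw [codisjoint_iff.1 hcompl.2]; trivial : x ∈ S ⊔ K)
      obtain ⟨s', hs', k', hk', rfl⟩ := Submodule.mem_sup.1
        (by rw [codisjoint_iff.1 hcompl.2]; trivial : y ∈ S ⊔ K)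
      have hQx : Q (s + k) = s := by
        rw [map_add, hQleft s hs, hQright k hk, add_zero]
      have hQy : Q (s' + k') = s' := by
        rw [map_add, hQleft s' hs', hQright k' hk', add_zero]
      rw [hQx, hQy]
      have horth : ∀ u ∈ S, ∀ v ∈ T, (inner ℂ (W u) v : ℂ) = 0 := by
        intro u hu v hv
        exact (Submodule.mem_orthogonal _ v).1 hv (W u) ⟨u, hu, rfl⟩
      have h1 : (inner ℂ (W s) (s' + k') : ℂ) = inner ℂ (W s) s' := by
        rw [inner_add_right, horth s hs k' (Submodule.mem_inf.mp hk').1, add_zero]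
      have h2 : (inner ℂ (W (s + k)) s' : ℂ) = inner ℂ (W s) s' := by
        rw [map_add, inner_add_left]
        have : (inner ℂ (W k) s' : ℂ) = 0 := by
          have hsa : (inner ℂ (W k) s' : ℂ) = inner ℂ k (W s') := by
            conv_lhs => rw [← hWsa]
            exact ContinuousLinearMap.adjoint_inner_left W s' k
          rw [hsa, ← inner_conj_symm, horth s' hs' k (Submodule.mem_inf.mp hk).1, map_zero]
        rw [this, add_zero]
      rw [h1, h2]
end

section
/- Let T : H → E and V : H → F be bounded operators between Hilbert spaces, and suppose the pair (T*T, N(V)) is compatible, i.e. H = N(V) + (T*T(N(V)))^⊥. Then for every h₀ ∈ H the set sp(T, N(V), h₀) = { h ∈ h₀ + N(V) : ‖Th‖ = min_{z ∈ N(V)} ‖T(h₀ + z)‖ } is nonempty; i.e. the classical abstract spline problem min ‖Th‖ subject to Vh = Vh₀ has a solution for every h₀. -/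
/-- If the pair `(T*T, N(V))` is compatible, the abstract spline problem has a solution for
every `h₀`. -/
theorem stmt_9 {H E F : Type*} [NormedAddCommGroup H] [InnerProductSpace ℂ H] [CompleteSpace H]
    [NormedAddCommGroup E] [InnerProductSpace ℂ E] [CompleteSpace E]
    [NormedAddCommGroup F] [InnerProductSpace ℂ F] [CompleteSpace F]
    [TopologicalSpace.SeparableSpace H] [TopologicalSpace.SeparableSpace E]
    [TopologicalSpace.SeparableSpace F]
    (T : H →L[ℂ] E) (V : H →L[ℂ] F)
    (hcomp : LinearMap.ker (V : H →ₗ[ℂ] F) ⊔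
        (Submodule.map ((ContinuousLinearMap.adjoint T ∘L T : H →L[ℂ] H) : H →ₗ[ℂ] H) (LinearMap.ker (V : H →ₗ[ℂ] F)))ᗮ = ⊤) :
    ∀ h₀ : H, ∃ h : H, h - h₀ ∈ LinearMap.ker (V : H →ₗ[ℂ] F) ∧
      ∀ z ∈ LinearMap.ker (V : H →ₗ[ℂ] F), ‖T h‖ ≤ ‖T (h₀ + z)‖ := by
  intro h₀
  have hmem : h₀ ∈ LinearMap.ker (V : H →ₗ[ℂ] F) ⊔
      (Submodule.map ((ContinuousLinearMap.adjoint T ∘L T : H →L[ℂ] H) : H →ₗ[ℂ] H) (LinearMap.ker (V : H →ₗ[ℂ] F)))ᗮ := by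
    rw [hcomp]; trivial
  obtain ⟨n, hn, m, hm, hnm⟩ := Submodule.mem_sup.mp hmem
  refine ⟨m, ?_, ?_⟩
  · have : m - h₀ = -n := by rw [← hnm]; abel
    rw [this]
    exact neg_mem hn
  · intro z hz
    have hw : n + z ∈ LinearMap.ker (V : H →ₗ[ℂ] F) := add_mem hn hz
    have hrw : h₀ + z = m + (n + z) := by rw [← hnm]; abel
    rw [hrw]
    have horth : (inner ℂ (T (n + z)) (T m) : ℂ) = 0 := by
      have : (inner ℂ ((ContinuousLinearMap.adjoint T ∘L T) (n + z)) m : ℂ) = 0 :=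
        hm _ (Submodule.mem_map_of_mem hw)
      rwa [ContinuousLinearMap.comp_apply, ContinuousLinearMap.adjoint_inner_left] at this
    have hsq : ‖T (m + (n + z))‖ ^ 2 = ‖T (n + z)‖ ^ 2 + ‖T m‖ ^ 2 := by
      rw [map_add, add_comm (T m)]
      simpa [pow_two] using norm_add_sq_eq_norm_sq_add_norm_sq_of_inner_eq_zero _ _ horth
    nlinarith [norm_nonneg (T (n + z)), norm_nonneg (T m), norm_nonneg (T (m + (n + z)))]
end

section
/- Let T : H → E, V : H → F be bounded operators. There exists a bounded operator G : H → H with Gh ∈ sp(T, N(V), h) for every h ∈ H (a bounded global solution of the spline problem) if and only if the pair (T*T, N(V)) is compatible, i.e. H = N(V) + (T*T(N(V)))^⊥. -/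
open ContinuousLinearMap Submodule

local notation "⟪" x ", " y "⟫" => @inner ℂ _ _ x y

/-- If `a` has minimal norm among `a + c • b`, then `⟪a, b⟫ = 0`. -/
lemma aux_variational {E : Type*} [NormedAddCommGroup E] [InnerProductSpace ℂ E]
    (a b : E) (h : ∀ c : ℂ, ‖a‖ ≤ ‖a + c • b‖) : ⟪a, b⟫ = 0 := by
  by_cases hb : b = 0
  · simp [hb]
  have hbn : (0:ℝ) < ‖b‖ := norm_pos_iff.2 hb
  set d : ℂ := ⟪a, b⟫ with hd
  set c : ℂ := -((starRingEnd ℂ) d / ((‖b‖:ℂ)^2)) with hc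
  have hsq : ‖a + c • b‖ ^ 2 = ‖a‖ ^ 2 + 2 * RCLike.re ⟪a, c • b⟫ + ‖c • b‖ ^ 2 :=
    norm_add_sq a (c • b)
  have h1 : ⟪a, c • b⟫ = c * d := by rw [inner_smul_right]
  have key : (starRingEnd ℂ) d * d = (((‖d‖^2 : ℝ)) : ℂ) := by
    rw [mul_comm, Complex.mul_conj, Complex.normSq_eq_norm_sq]
  have h2 : RCLike.re (c * d) = -(‖d‖^2 / ‖b‖^2) := by
    have hcd : c * d = (((-(‖d‖^2 / ‖b‖^2)) : ℝ) : ℂ) := by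
      rw [hc, neg_mul, div_mul_eq_mul_div, key]
      push_cast
      ring
    rw [hcd, RCLike.re_to_complex, Complex.ofReal_re]
  have h3 : ‖c • b‖ ^ 2 = ‖d‖^2 / ‖b‖^2 := by
    rw [norm_smul, hc]
    have hcn : ‖-((starRingEnd ℂ) d / ((‖b‖:ℂ)^2))‖ = ‖d‖ / ‖b‖^2 := by
      rw [norm_neg, norm_div, RCLike.norm_conj]
      congr 1
      rw [← Complex.ofReal_pow, Complex.norm_real]
      exact abs_of_nonneg (by positivity)
    rw [hcn]
    field_simp
  have hle := h c
  have hle2 : ‖a‖ ^ 2 ≤ ‖a + c • b‖ ^ 2 := by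
    have := norm_nonneg a
    nlinarith [norm_nonneg (a + c • b)]
  rw [hsq, h1, h2, h3] at hle2
  have hd0 : ‖d‖ ^ 2 / ‖b‖ ^ 2 ≤ 0 := by nlinarith
  have hb2 : (0:ℝ) < ‖b‖^2 := by positivity
  have h4 : ‖d‖ ^ 2 ≤ 0 := by
    have := mul_le_mul_of_nonneg_right hd0 hb2.le
    rwa [div_mul_cancel₀ _ (ne_of_gt hb2), zero_mul] at this
  have : ‖d‖ = 0 := by nlinarith [norm_nonneg d]
  simpa [hd] using norm_eq_zero.mp this

/-- There is a bounded global solution of the spline problem iff the pair `(T*T, N(V))` is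
compatible. -/
theorem stmt_10 {H E F : Type*} [NormedAddCommGroup H] [InnerProductSpace ℂ H] [CompleteSpace H]
    [NormedAddCommGroup E] [InnerProductSpace ℂ E] [CompleteSpace E]
    [NormedAddCommGroup F] [InnerProductSpace ℂ F] [CompleteSpace F]
    [TopologicalSpace.SeparableSpace H] [TopologicalSpace.SeparableSpace E]
    [TopologicalSpace.SeparableSpace F]
    (T : H →L[ℂ] E) (V : H →L[ℂ] F) :
    (∃ G : H →L[ℂ] H, ∀ h : H, G h - h ∈ LinearMap.ker (V : H →ₗ[ℂ] F) ∧
        ∀ z ∈ LinearMap.ker (V : H →ₗ[ℂ] F), ‖T (G h)‖ ≤ ‖T (h + z)‖) ↔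
      LinearMap.ker (V : H →ₗ[ℂ] F) ⊔
        (Submodule.map ((ContinuousLinearMap.adjoint T ∘L T : H →L[ℂ] H) : H →ₗ[ℂ] H) (LinearMap.ker (V : H →ₗ[ℂ] F)))ᗮ = ⊤ := by
  set N : Submodule ℂ H := LinearMap.ker (V : H →ₗ[ℂ] F) with hN
  set M : Submodule ℂ H := (Submodule.map ((ContinuousLinearMap.adjoint T ∘L T : H →L[ℂ] H) : H →ₗ[ℂ] H) N)ᗮ with hM
  -- membership in M is the orthogonality condition
  have hmemM : ∀ k : H, k ∈ M ↔ ∀ z ∈ N, ⟪T k, T z⟫ = 0 := by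
    intro k
    constructor
    · intro hk z hz
      have := hk _ (Submodule.mem_map_of_mem (f := ((ContinuousLinearMap.adjoint T ∘L T : H →L[ℂ] H) : H →ₗ[ℂ] H)) hz)
      -- this : ⟪(T† ∘L T) z, k⟫ = 0
      have h2 : ⟪T z, T k⟫ = 0 := by
        rwa [ContinuousLinearMap.coe_coe, ContinuousLinearMap.comp_apply,
          ContinuousLinearMap.adjoint_inner_left] at this
      have := congrArg (starRingEnd ℂ) h2
      rwa [inner_conj_symm, map_zero] at this
    · intro hk
      intro u hu
      rcases hu with ⟨z, hz, rfl⟩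
      rw [ContinuousLinearMap.coe_coe, ContinuousLinearMap.comp_apply, ContinuousLinearMap.adjoint_inner_left]
      have := congrArg (starRingEnd ℂ) (hk z hz)
      rwa [inner_conj_symm, map_zero] at this
  constructor
  · rintro ⟨G, hG⟩
    rw [eq_top_iff]
    intro h _
    obtain ⟨hker, hmin⟩ := hG h
    have hGM : G h ∈ M := by
      rw [hmemM]
      intro z hz
      apply aux_variational
      intro c
      have hw : c • z + (G h - h) ∈ N := N.add_mem (N.smul_mem c hz) hker
      have := hmin _ hw
      calc ‖T (G h)‖ ≤ ‖T (h + (c • z + (G h - h)))‖ := this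
        _ = ‖T (G h) + c • T z‖ := by
            congr 1
            have heq : h + (c • z + (G h - h)) = G h + c • z := by abel
            rw [heq, map_add, map_smul]
    have hsum : h = (h - G h) + G h := by abel
    rw [hsum]
    apply Submodule.add_mem_sup _ hGM
    have := N.neg_mem hker
    simpa using this
  · intro hcompat
    have hNclosed : IsClosed (N : Set H) := ContinuousLinearMap.isClosed_ker V
    have hMclosed : IsClosed (M : Set H) := Submodule.isClosed_orthogonal _
    set N₀ : Submodule ℂ H := N ⊓ M with hN₀
    have hN₀closed : IsClosed (N₀ : Set H) := hNclosed.inter hMclosed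
    haveI : CompleteSpace N₀ := hN₀closed.completeSpace_coe
    set M₁ : Submodule ℂ H := M ⊓ N₀ᗮ with hM₁
    have hM₁closed : IsClosed (M₁ : Set H) := hMclosed.inter (Submodule.isClosed_orthogonal _)
    have hdisj : Disjoint N M₁ := by
      rw [Submodule.disjoint_def]
      intro x hxN hxM₁
      rcases hxM₁ with ⟨hxM, hxO⟩
      have hx0 : x ∈ N₀ := ⟨hxN, hxM⟩
      have := hxO x hx0
      exact inner_self_eq_zero.mp this
    have hcodis : Codisjoint N M₁ := by
      rw [codisjoint_iff, eq_top_iff, ← hcompat]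
      apply sup_le le_sup_left
      intro m hm
      -- decompose m along N₀
      have hproj : (orthogonalProjection N₀ m : H) ∈ N₀ := (orthogonalProjection N₀ m).2
      have hsub : m - orthogonalProjection N₀ m ∈ N₀ᗮ :=
        sub_starProjection_mem_orthogonal (K := N₀) m
      have hsubM : m - orthogonalProjection N₀ m ∈ M := by
        have : (orthogonalProjection N₀ m : H) ∈ M := hproj.2
        exact M.sub_mem hm this
      have : m = (orthogonalProjection N₀ m : H) + (m - orthogonalProjection N₀ m) := by abel
      rw [this]
      exact Submodule.add_mem_sup hproj.1 ⟨hsubM, hsub⟩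
    have hcompl : IsCompl N M₁ := ⟨hdisj, hcodis⟩
    -- continuous projection onto M₁ along N
    refine ⟨M₁.subtypeL ∘L M₁.linearProjOfClosedCompl N hcompl.symm hM₁closed hNclosed, ?_⟩
    intro h
    set P := M₁.linearProjOfClosedCompl N hcompl.symm hM₁closed hNclosed with hP
    have hPval : (P h : H) ∈ M₁ := (P h).2
    have hker : (P h : H) - h ∈ N := by
      have hPh : P h = M₁.projectionOnto N hcompl.symm h :=
        congrFun (Submodule.coe_continuous_linearProjOfClosedCompl'
          hcompl.symm hM₁closed hNclosed) h
      have hself : (↑(M₁.projectionOnto N hcompl.symm h) : H) + ↑(N.projectionOnto M₁ hcompl.symm.symm h) = h :=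
        Submodule.projection_add_projection_eq_self hcompl.symm h
      have heq : (↑(M₁.projectionOnto N hcompl.symm h) : H) - h
          = -(↑(N.projectionOnto M₁ hcompl.symm.symm h) : H) := by
        rw [eq_neg_iff_add_eq_zero, sub_add_eq_add_sub, hself, sub_self]
      rw [hPh, heq]
      exact N.neg_mem (N.projectionOnto M₁ hcompl.symm.symm h).2
    constructor
    · simpa using hker

    · intro z hz
      have hPM : (P h : H) ∈ M := hPval.1
      have horth : ∀ w ∈ N, ⟪T (P h : H), T w⟫ = 0 := (hmemM _).mp hPM
      have hw : z - ((P h : H) - h) ∈ N := N.sub_mem hz hker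
      have hrw : h + z = (P h : H) + (z - ((P h : H) - h)) := by abel
      have hinner := horth _ hw
      have hpyth : ‖T (h + z)‖ ^ 2 = ‖T (P h : H)‖ ^ 2 + ‖T (z - ((P h : H) - h))‖ ^ 2 := by
        rw [hrw, map_add]
        simpa [pow_two] using
          norm_add_sq_eq_norm_sq_add_norm_sq_of_inner_eq_zero _ _ hinner
      have h1 : (0:ℝ) ≤ ‖T (z - ((P h : H) - h))‖ ^ 2 := by positivity
      have h2 : (0:ℝ) ≤ ‖T (h + z)‖ := norm_nonneg _
      have h3 : (0:ℝ) ≤ ‖T (P h : H)‖ := norm_nonneg _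
      have hfin : ‖T (P h : H)‖ ≤ ‖T (h + z)‖ := by nlinarith
      simpa using hfin
end

section
/- Let T : H → E and V : H → F be bounded operators between separable Hilbert spaces. For f₀ ∈ F, the minimum min_{h ∈ H} (‖Th‖² + ‖Vh − f₀‖²) exists if and only if the equation (T*T + V*V)h = V*f₀ has a solution h ∈ H. Consequently, the minimum exists for every f₀ ∈ F if and only if R(V*) ⊆ R(T*T + V*V). -/
open ContinuousLinearMap RCLike

local notation "⟪" x ", " y "⟫" => @inner ℂ _ _ x y

/-- The smoothing problem `min (‖Th‖² + ‖Vh − f₀‖²)` has a solution iff the normal equation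
`(T*T + V*V)h = V*f₀` is solvable; it is solvable for every `f₀` iff
`R(V*) ⊆ R(T*T + V*V)`. -/
theorem stmt_11 {H E F : Type*} [NormedAddCommGroup H] [InnerProductSpace ℂ H] [CompleteSpace H]
    [NormedAddCommGroup E] [InnerProductSpace ℂ E] [CompleteSpace E]
    [NormedAddCommGroup F] [InnerProductSpace ℂ F] [CompleteSpace F]
    [TopologicalSpace.SeparableSpace H] [TopologicalSpace.SeparableSpace E]
    [TopologicalSpace.SeparableSpace F]
    (T : H →L[ℂ] E) (V : H →L[ℂ] F) :
    (∀ f₀ : F,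
      (∃ h : H, ∀ z : H, ‖T h‖ ^ 2 + ‖V h - f₀‖ ^ 2 ≤ ‖T z‖ ^ 2 + ‖V z - f₀‖ ^ 2) ↔
        ∃ h : H, (ContinuousLinearMap.adjoint T ∘L T + ContinuousLinearMap.adjoint V ∘L V) h =
          ContinuousLinearMap.adjoint V f₀) ∧
    ((∀ f₀ : F, ∃ h : H, ∀ z : H,
        ‖T h‖ ^ 2 + ‖V h - f₀‖ ^ 2 ≤ ‖T z‖ ^ 2 + ‖V z - f₀‖ ^ 2) ↔
      LinearMap.range (ContinuousLinearMap.adjoint V : F →ₗ[ℂ] H) ≤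
        LinearMap.range ((ContinuousLinearMap.adjoint T ∘L T +
          ContinuousLinearMap.adjoint V ∘L V : H →L[ℂ] H) : H →ₗ[ℂ] H)) := by
  set A := ContinuousLinearMap.adjoint T ∘L T + ContinuousLinearMap.adjoint V ∘L V with hA
  have key : ∀ (f₀ : F) (h u : H),
      ‖T (h + u)‖ ^ 2 + ‖V (h + u) - f₀‖ ^ 2 =
        (‖T h‖ ^ 2 + ‖V h - f₀‖ ^ 2)
          + 2 * re (⟪A h - ContinuousLinearMap.adjoint V f₀, u⟫)
          + (‖T u‖ ^ 2 + ‖V u‖ ^ 2) := by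
    intro f₀ h u
    have e1 : T (h + u) = T h + T u := map_add _ _ _
    have e2 : V (h + u) - f₀ = (V h - f₀) + V u := by rw [map_add]; abel
    have i : re (⟪A h - ContinuousLinearMap.adjoint V f₀, u⟫)
        = re (⟪T h, T u⟫) + re (⟪V h - f₀, V u⟫) := by
      simp only [hA, ContinuousLinearMap.add_apply, ContinuousLinearMap.comp_apply,
        inner_sub_left, inner_add_left, ContinuousLinearMap.adjoint_inner_left, map_add, map_sub]
      ring
    rw [e1, e2, @norm_add_sq ℂ, @norm_add_sq ℂ, i]
    ring
  have main : ∀ f₀ : F,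
      (∃ h : H, ∀ z : H, ‖T h‖ ^ 2 + ‖V h - f₀‖ ^ 2 ≤ ‖T z‖ ^ 2 + ‖V z - f₀‖ ^ 2) ↔
        ∃ h : H, A h = ContinuousLinearMap.adjoint V f₀ := by
    intro f₀
    constructor
    · rintro ⟨h, hmin⟩
      refine ⟨h, ?_⟩
      set g := A h - ContinuousLinearMap.adjoint V f₀ with hg
      suffices hgz : g = 0 by exact sub_eq_zero.mp hgz
      by_contra hne
      have hG : (0:ℝ) < ‖g‖ ^ 2 := pow_pos (norm_pos_iff.mpr hne) 2
      set C := ‖T g‖ ^ 2 + ‖V g‖ ^ 2 with hC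
      have hC0 : (0:ℝ) ≤ C := by positivity
      have step : ∀ t : ℝ, 0 < t → 2 * t * ‖g‖ ^ 2 ≤ t ^ 2 * C := by
        intro t ht
        have hk := key f₀ h (((-t : ℝ) : ℂ) • g)
        have hm := hmin (h + ((-t : ℝ) : ℂ) • g)
        have hre : re (⟪g, ((-t : ℝ) : ℂ) • g⟫) = -t * ‖g‖ ^ 2 := by
          rw [inner_smul_right, inner_self_eq_norm_sq_to_K]
          simp [RCLike.re_to_complex, Complex.mul_re]
          left
          rw [← Complex.ofReal_pow]
          exact Complex.ofReal_re _
        have hn1 : ‖T (((-t : ℝ) : ℂ) • g)‖ ^ 2 = t ^ 2 * ‖T g‖ ^ 2 := by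
          rw [map_smul, norm_smul]
          simp [abs_of_pos ht]
          ring
        have hn2 : ‖V (((-t : ℝ) : ℂ) • g)‖ ^ 2 = t ^ 2 * ‖V g‖ ^ 2 := by
          rw [map_smul, norm_smul]
          simp [abs_of_pos ht]
          ring
        rw [hk, hre, hn1, hn2] at hm
        rw [hC]
        nlinarith [hm]
      have hdiv : ∀ t : ℝ, 0 < t → 2 * ‖g‖ ^ 2 ≤ t * C := by
        intro t ht
        have hs := step t ht
        have h2 : t * (2 * ‖g‖ ^ 2) ≤ t * (t * C) := by nlinarith [hs]
        exact le_of_mul_le_mul_left h2 ht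
      rcases eq_or_lt_of_le hC0 with hc | hc
      · have := hdiv 1 one_pos
        rw [← hc] at this
        linarith
      · have := hdiv (‖g‖ ^ 2 / C) (div_pos hG hc)
        rw [div_mul_cancel₀ _ (ne_of_gt hc)] at this
        linarith
    · rintro ⟨h, hh⟩
      refine ⟨h, fun z => ?_⟩
      have hk := key f₀ h (z - h)
      have : A h - ContinuousLinearMap.adjoint V f₀ = 0 := by rw [hh]; simp
      rw [this] at hk
      simp only [add_sub_cancel] at hk
      rw [hk]
      simp
      positivity
  refine ⟨main, ?_⟩
  constructor
  · intro hall
    rintro x ⟨f₀, rfl⟩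
    exact (main f₀).mp (hall f₀)
  · intro hr f₀
    exact (main f₀).mpr (hr ⟨f₀, rfl⟩)
end

section
/- Let T : H → E and V : H → F be bounded operators with R(V*) ⊆ R(T*T + V*V). Then there exists a bounded operator G : F → H such that ‖TGf‖² + ‖VGf − f‖² = min_{h∈H} (‖Th‖² + ‖Vh − f‖²) for every f ∈ F (a bounded global solution of the smoothing problem). -/
open ContinuousLinearMap

/-- If `R(V*) ⊆ R(T*T + V*V)` then the smoothing problem has a bounded global solution. -/
theorem stmt_12 {H E F : Type*} [NormedAddCommGroup H] [InnerProductSpace ℂ H] [CompleteSpace H]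
    [NormedAddCommGroup E] [InnerProductSpace ℂ E] [CompleteSpace E]
    [NormedAddCommGroup F] [InnerProductSpace ℂ F] [CompleteSpace F]
    [TopologicalSpace.SeparableSpace H] [TopologicalSpace.SeparableSpace E]
    [TopologicalSpace.SeparableSpace F]
    (T : H →L[ℂ] E) (V : H →L[ℂ] F)
    (hr : LinearMap.range (ContinuousLinearMap.adjoint V : F →ₗ[ℂ] H) ≤
      LinearMap.range ((ContinuousLinearMap.adjoint T ∘L T + ContinuousLinearMap.adjoint V ∘L V :
        H →L[ℂ] H) : H →ₗ[ℂ] H)) :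
    ∃ G : F →L[ℂ] H, ∀ (f : F) (h : H),
      ‖T (G f)‖ ^ 2 + ‖V (G f) - f‖ ^ 2 ≤ ‖T h‖ ^ 2 + ‖V h - f‖ ^ 2 := by
  set S : H →L[ℂ] H := ContinuousLinearMap.adjoint T ∘L T + ContinuousLinearMap.adjoint V ∘L V
    with hS
  set K : Submodule ℂ H := LinearMap.ker (S : H →ₗ[ℂ] H) with hK
  have hKclosed : IsClosed (K : Set H) := ContinuousLinearMap.isClosed_ker S
  haveI : CompleteSpace K := hKclosed.completeSpace_coe
  -- existence and uniqueness of the minimal-norm solution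
  have key : ∀ f : F, ∃! h : H, h ∈ Kᗮ ∧ S h = ContinuousLinearMap.adjoint V f := by
    intro f
    obtain ⟨h, hh⟩ := hr (LinearMap.mem_range_self _ f)
    replace hh : S h = ContinuousLinearMap.adjoint V f := hh
    refine ⟨h - (K.orthogonalProjectionOnto h : H), ⟨K.sub_starProjection_mem_orthogonal h, ?_⟩,
      ?_⟩
    · have hker : S ((K.orthogonalProjectionOnto h : H)) = 0 := (K.orthogonalProjectionOnto h).2
      rw [map_sub, hker, sub_zero, hh]
    · rintro y ⟨hy1, hy2⟩
      have hd : y - (h - (K.orthogonalProjectionOnto h : H)) ∈ K := by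
        have : S (y - (h - (K.orthogonalProjectionOnto h : H))) = 0 := by
          have hker : S ((K.orthogonalProjectionOnto h : H)) = 0 := (K.orthogonalProjectionOnto h).2
          rw [map_sub, map_sub, hker, sub_zero, hh, hy2, sub_self]
        exact this
      have hd' : y - (h - (K.orthogonalProjectionOnto h : H)) ∈ Kᗮ :=
        Submodule.sub_mem _ hy1 (K.sub_starProjection_mem_orthogonal h)
      have := (Submodule.mem_inf.2 ⟨hd, hd'⟩)
      rw [Submodule.inf_orthogonal_eq_bot K, Submodule.mem_bot] at this
      exact sub_eq_zero.mp this
  classical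
  -- the underlying function
  let g0 : F → H := fun f => (key f).exists.choose
  have hg0 : ∀ f : F, g0 f ∈ Kᗮ ∧ S (g0 f) = ContinuousLinearMap.adjoint V f := fun f =>
    (key f).exists.choose_spec
  have hg0u : ∀ (f : F) (y : H), y ∈ Kᗮ → S y = ContinuousLinearMap.adjoint V f → y = g0 f := by
    intro f y h1 h2
    exact ((key f).unique ⟨h1, h2⟩ (hg0 f))
  -- linearity
  let g : F →ₗ[ℂ] H :=
    { toFun := g0
      map_add' := fun f₁ f₂ => by
        refine (hg0u (f₁ + f₂) (g0 f₁ + g0 f₂) ?_ ?_).symm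
        · exact Submodule.add_mem _ (hg0 f₁).1 (hg0 f₂).1
        · rw [map_add, (hg0 f₁).2, (hg0 f₂).2, map_add]
      map_smul' := fun c f => by
        refine (hg0u (c • f) (c • g0 f) ?_ ?_).symm
        · exact Submodule.smul_mem _ _ (hg0 f).1
        · rw [map_smul, (hg0 f).2, map_smul] }
  -- continuity via the closed graph theorem
  have hgraph : (g.graph : Set (F × H)) =
      {p : F × H | p.2 ∈ Kᗮ ∧ S p.2 - ContinuousLinearMap.adjoint V p.1 = 0} := by
    ext p
    constructor
    · intro hp
      rw [SetLike.mem_coe, LinearMap.mem_graph_iff] at hp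
      refine ⟨hp ▸ (hg0 p.1).1, ?_⟩
      rw [hp]
      exact sub_eq_zero.mpr (hg0 p.1).2
    · rintro ⟨h1, h2⟩
      rw [SetLike.mem_coe, LinearMap.mem_graph_iff]
      exact (hg0u p.1 p.2 h1 (sub_eq_zero.mp h2)).symm ▸ rfl
  have hclosed : IsClosed (g.graph : Set (F × H)) := by
    rw [hgraph]
    refine IsClosed.inter ?_ ?_
    · exact (Submodule.isClosed_orthogonal K).preimage continuous_snd
    · have : Continuous fun p : F × H => S p.2 - ContinuousLinearMap.adjoint V p.1 :=
        (S.continuous.comp continuous_snd).sub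
          ((ContinuousLinearMap.adjoint V).continuous.comp continuous_fst)
      exact isClosed_singleton.preimage this
  have hcont : Continuous g := g.continuous_of_isClosed_graph hclosed
  refine ⟨⟨g, hcont⟩, ?_⟩
  intro f h
  have hGf : S (g0 f) = ContinuousLinearMap.adjoint V f := (hg0 f).2
  set gf := g0 f with hgf
  set d := h - gf with hd
  have hrep : h = gf + d := by rw [hd]; abel
  -- cross term vanishes
  have cross : inner ℂ (T gf) (T d) + inner ℂ (V gf - f) (V d) = (0 : ℂ) := by
    have h1 : (inner ℂ (T gf) (T d) : ℂ) = inner ℂ (ContinuousLinearMap.adjoint T (T gf)) d :=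
      (ContinuousLinearMap.adjoint_inner_left T d (T gf)).symm
    have h2 : (inner ℂ (V gf - f) (V d) : ℂ) =
        inner ℂ (ContinuousLinearMap.adjoint V (V gf) - ContinuousLinearMap.adjoint V f) d := by
      rw [← map_sub]
      exact (ContinuousLinearMap.adjoint_inner_left V d (V gf - f)).symm
    rw [h1, h2, ← inner_add_left]
    have : ContinuousLinearMap.adjoint T (T gf) +
        (ContinuousLinearMap.adjoint V (V gf) - ContinuousLinearMap.adjoint V f) = 0 := by
      have : S gf = ContinuousLinearMap.adjoint T (T gf) +
          ContinuousLinearMap.adjoint V (V gf) := by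
        simp [hS]
      rw [← add_sub_assoc, ← this, hGf, sub_self]
    rw [this, inner_zero_left]
  have crossRe : RCLike.re (inner ℂ (T gf) (T d) : ℂ) +
      RCLike.re (inner ℂ (V gf - f) (V d) : ℂ) = 0 := by
    have := congrArg RCLike.re cross
    simpa [map_add] using this
  have e1 : ‖T h‖ ^ 2 = ‖T gf‖ ^ 2 + 2 * RCLike.re (inner ℂ (T gf) (T d) : ℂ) + ‖T d‖ ^ 2 := by
    rw [hrep, map_add]
    exact norm_add_sq (T gf) (T d)
  have e2 : ‖V h - f‖ ^ 2 =
      ‖V gf - f‖ ^ 2 + 2 * RCLike.re (inner ℂ (V gf - f) (V d) : ℂ) + ‖V d‖ ^ 2 := by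
    have : V h - f = (V gf - f) + V d := by rw [hrep, map_add]; abel
    rw [this]
    exact norm_add_sq (V gf - f) (V d)
  have hTGf : T ((⟨g, hcont⟩ : F →L[ℂ] H) f) = T gf := rfl
  have hVGf : V ((⟨g, hcont⟩ : F →L[ℂ] H) f) = V gf := rfl
  rw [hTGf, hVGf, e1, e2]
  nlinarith [sq_nonneg ‖T d‖, sq_nonneg ‖V d‖, crossRe]
end

section
/- Let A : H → F be a bounded operator and w : H → H positive semidefinite. Define Â : H → F ⊕ H by Âh = (Ah, h) and let W = diag(I, w) on F ⊕ H. Then Â admits a W-inverse if and only if A admits a W-optimal inverse, i.e. if and only if the equation (A*A + w)X = A* admits a bounded solution. -/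
open ContinuousLinearMap

section aux
variable {H F : Type*} [NormedAddCommGroup H] [InnerProductSpace ℂ H] [CompleteSpace H]
  [NormedAddCommGroup F] [InnerProductSpace ℂ F] [CompleteSpace F]

private lemma expand_aux (A : H →L[ℂ] F) (w : H →L[ℂ] H) (hw : w.IsPositive)
    (f : F) (g : H) (x u : H) :
    ‖A (x + u) - f‖ ^ 2 + (inner ℂ (w ((x + u) - g)) ((x + u) - g) : ℂ).re
    = (‖A x - f‖ ^ 2 + (inner ℂ (w (x - g)) (x - g) : ℂ).re)
      + 2 * (inner ℂ ((ContinuousLinearMap.adjoint A ∘L A + w) x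
          - (ContinuousLinearMap.adjoint A f + w g)) u : ℂ).re
      + (‖A u‖ ^ 2 + (inner ℂ (w u) u : ℂ).re) := by
  have h1 : A (x + u) - f = (A x - f) + A u := by rw [map_add]; abel
  have h2 : (x + u) - g = (x - g) + u := by abel
  have hnorm : ‖(A x - f) + A u‖ ^ 2
      = ‖A x - f‖ ^ 2 + 2 * (inner ℂ (A x - f) (A u) : ℂ).re + ‖A u‖ ^ 2 := by
    have := @norm_add_sq ℂ F _ _ _ (A x - f) (A u)
    exact this
  have hsa : ∀ a b : H, (inner ℂ (w a) b : ℂ).re = (inner ℂ (w b) a : ℂ).re := by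
    intro a b
    have h := hw.1
    have step : (inner ℂ (w a) b : ℂ) = inner ℂ a (w b) := h a b
    rw [step, ← Complex.conj_re (inner ℂ (w b) a), inner_conj_symm]
  have hadj : (inner ℂ (A x - f) (A u) : ℂ)
      = inner ℂ (ContinuousLinearMap.adjoint A (A x - f)) u := by
    rw [ContinuousLinearMap.adjoint_inner_left]
  have hr : ContinuousLinearMap.adjoint A (A x - f) + w (x - g)
      = (ContinuousLinearMap.adjoint A ∘L A + w) x
        - (ContinuousLinearMap.adjoint A f + w g) := by
    simp [map_sub]; abel
  rw [h1, h2, hnorm, map_add w, inner_add_left, inner_add_right, inner_add_right]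
  rw [hadj, ← hr]
  simp only [inner_add_left, Complex.add_re]
  have := hsa u (x - g)
  ring_nf
  linarith [this]

private lemma opt_iff (A : H →L[ℂ] F) (w : H →L[ℂ] H) (hw : w.IsPositive)
    (f : F) (g : H) (x : H) :
    (∀ z : H, ‖A x - f‖ ^ 2 + (inner ℂ (w (x - g)) (x - g) : ℂ).re ≤
        ‖A z - f‖ ^ 2 + (inner ℂ (w (z - g)) (z - g) : ℂ).re) ↔
      (ContinuousLinearMap.adjoint A ∘L A + w) x
        = ContinuousLinearMap.adjoint A f + w g := by
  constructor
  · intro hmin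
    set r := (ContinuousLinearMap.adjoint A ∘L A + w) x
        - (ContinuousLinearMap.adjoint A f + w g) with hrdef
    have key : ∀ t : ℝ, 0 ≤ 2 * (inner ℂ r (((-t : ℂ)) • r) : ℂ).re
        + (‖A (((-t : ℂ)) • r)‖ ^ 2 + (inner ℂ (w (((-t : ℂ)) • r)) (((-t : ℂ)) • r) : ℂ).re) := by
      intro t
      have h := hmin (x + ((-t : ℂ)) • r)
      have he := expand_aux A w hw f g x (((-t : ℂ)) • r)
      rw [he] at h
      linarith
    have hN : ‖r‖ ^ 2 = 0 := by
      set N := ‖r‖ ^ 2 with hNdef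
      set C := ‖A r‖ ^ 2 + (inner ℂ (w r) r : ℂ).re with hCdef
      have hwr : (0:ℝ) ≤ (inner ℂ (w r) r : ℂ).re := hw.2 r
      have hC0 : 0 ≤ C := by
        have : (0:ℝ) ≤ ‖A r‖ ^ 2 := by positivity
        rw [hCdef]; linarith
      have hN0 : 0 ≤ N := by positivity
      have hkey : ∀ t : ℝ, 0 ≤ -2 * t * N + t ^ 2 * C := by
        intro t
        have h := key t
        have e1 : (inner ℂ r (((-t : ℂ)) • r) : ℂ).re = -t * N := by
          rw [inner_smul_right, inner_self_eq_norm_sq_to_K]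
          norm_num [← Complex.ofReal_pow, ← Complex.ofReal_mul, hNdef]
        have e2 : ‖A (((-t : ℂ)) • r)‖ ^ 2 = t ^ 2 * ‖A r‖ ^ 2 := by
          rw [map_smul, norm_smul]
          simp [mul_pow]
        have e3 : (inner ℂ (w (((-t : ℂ)) • r)) (((-t : ℂ)) • r) : ℂ).re
            = t ^ 2 * (inner ℂ (w r) r : ℂ).re := by
          rw [map_smul, inner_smul_left, inner_smul_right]
          simp [Complex.mul_re]
          ring
        rw [e1, e2, e3] at h
        rw [hCdef]
        nlinarith [h]
      have hCpos : (0:ℝ) < C + 1 := by linarith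
      have h2 := mul_nonneg (hkey (N / (C + 1))) (sq_nonneg (C + 1))
      have h3 : (-2 * (N / (C + 1)) * N + (N / (C + 1)) ^ 2 * C) * (C + 1) ^ 2
          = -2 * N ^ 2 * (C + 1) + N ^ 2 * C := by
        field_simp
      rw [h3] at h2
      nlinarith [sq_nonneg N, hN0, hC0, h2]
    have hr0 : r = 0 := by
      have : ‖r‖ = 0 := by nlinarith [norm_nonneg r]
      exact norm_eq_zero.mp this
    rw [hrdef, sub_eq_zero] at hr0
    exact hr0
  · intro heq z
    have he := expand_aux A w hw f g x (z - x)
    rw [show x + (z - x) = z by abel] at he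
    rw [he, heq, sub_self]
    have h1 : 0 ≤ ‖A (z - x)‖ ^ 2 := by positivity
    have h2 : 0 ≤ (inner ℂ (w (z - x)) (z - x) : ℂ).re := hw.2 (z - x)
    simp only [inner_zero_left, Complex.zero_re, mul_zero, add_zero]
    linarith

end aux

section aux2
variable {H F : Type*} [NormedAddCommGroup H] [InnerProductSpace ℂ H] [CompleteSpace H]
  [NormedAddCommGroup F] [InnerProductSpace ℂ F] [CompleteSpace F]

private lemma opt_iff0 (A : H →L[ℂ] F) (w : H →L[ℂ] H) (hw : w.IsPositive)
    (f : F) (x : H) :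
    (∀ z : H, ‖A x - f‖ ^ 2 + (inner ℂ (w x) x : ℂ).re ≤
        ‖A z - f‖ ^ 2 + (inner ℂ (w z) z : ℂ).re) ↔
      (ContinuousLinearMap.adjoint A ∘L A + w) x = ContinuousLinearMap.adjoint A f := by
  have := opt_iff A w hw f 0 x
  simpa using this

end aux2

/-- For `W = diag(I, w)`, `Â` admits a `W`-inverse iff `A` admits a `W`-optimal inverse,
iff `(A*A + w)X = A*` has a bounded solution. -/
theorem stmt_15 {H F : Type*} [NormedAddCommGroup H] [InnerProductSpace ℂ H] [CompleteSpace H]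
    [NormedAddCommGroup F] [InnerProductSpace ℂ F] [CompleteSpace F]
    [TopologicalSpace.SeparableSpace H] [TopologicalSpace.SeparableSpace F]
    (A : H →L[ℂ] F) (w : H →L[ℂ] H) (hw : w.IsPositive) :
    ((∃ G' : (F × H) →L[ℂ] H, ∀ (ξ : F × H) (z : H),
        ‖A (G' ξ) - ξ.1‖ ^ 2 + (inner ℂ (w (G' ξ - ξ.2)) (G' ξ - ξ.2) : ℂ).re ≤
          ‖A z - ξ.1‖ ^ 2 + (inner ℂ (w (z - ξ.2)) (z - ξ.2) : ℂ).re) ↔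
      (∃ G : F →L[ℂ] H, ∀ (f : F) (z : H),
        ‖A (G f) - f‖ ^ 2 + (inner ℂ (w (G f)) (G f) : ℂ).re ≤
          ‖A z - f‖ ^ 2 + (inner ℂ (w z) z : ℂ).re)) ∧
    ((∃ G : F →L[ℂ] H, ∀ (f : F) (z : H),
        ‖A (G f) - f‖ ^ 2 + (inner ℂ (w (G f)) (G f) : ℂ).re ≤
          ‖A z - f‖ ^ 2 + (inner ℂ (w z) z : ℂ).re) ↔
      (∃ X : F →L[ℂ] H,
        (ContinuousLinearMap.adjoint A ∘L A + w) ∘L X = ContinuousLinearMap.adjoint A)) := by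
  have part2 : (∃ G : F →L[ℂ] H, ∀ (f : F) (z : H),
        ‖A (G f) - f‖ ^ 2 + (inner ℂ (w (G f)) (G f) : ℂ).re ≤
          ‖A z - f‖ ^ 2 + (inner ℂ (w z) z : ℂ).re) ↔
      (∃ X : F →L[ℂ] H,
        (ContinuousLinearMap.adjoint A ∘L A + w) ∘L X = ContinuousLinearMap.adjoint A) := by
    constructor
    · rintro ⟨G, hG⟩
      refine ⟨G, ContinuousLinearMap.ext fun f => ?_⟩
      simpa using (opt_iff0 A w hw f (G f)).mp (hG f)
    · rintro ⟨X, hX⟩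
      refine ⟨X, fun f => (opt_iff0 A w hw f (X f)).mpr ?_⟩
      simpa using congrFun (congrArg DFunLike.coe hX) f
  refine ⟨?_, part2⟩
  constructor
  · rintro ⟨G', hG'⟩
    refine ⟨G'.comp (ContinuousLinearMap.inl ℂ F H), fun f z => ?_⟩
    simpa using hG' (f, 0) z
  · intro hG
    obtain ⟨X, hX⟩ := part2.mp hG
    have hXf : ∀ f : F, (ContinuousLinearMap.adjoint A ∘L A + w) (X f)
        = ContinuousLinearMap.adjoint A f := fun f =>
      congrFun (congrArg DFunLike.coe hX) f
    set T := ContinuousLinearMap.adjoint A ∘L A + w with hT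
    refine ⟨X.comp (ContinuousLinearMap.fst ℂ F H) +
      (ContinuousLinearMap.snd ℂ F H - X.comp (A.comp (ContinuousLinearMap.snd ℂ F H))),
      fun ξ z => ?_⟩
    apply (opt_iff A w hw ξ.1 ξ.2 _).mpr ?_ z
    have hT2 : T ξ.2 = ContinuousLinearMap.adjoint A (A ξ.2) + w ξ.2 := by
      rw [hT]; rfl
    simp only [ContinuousLinearMap.add_apply, ContinuousLinearMap.sub_apply,
      ContinuousLinearMap.comp_apply, ContinuousLinearMap.coe_fst', ContinuousLinearMap.coe_snd', map_add, map_sub, hXf, hT2]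
    have e1 := hXf ξ.1
    have e2 := hXf (A ξ.2)
    simp only [hT, ContinuousLinearMap.add_apply, ContinuousLinearMap.comp_apply] at e1 e2
    linear_combination (norm := abel) e1 - e2
end

section
/- Let A : H → F be bounded, w : H → H positive semidefinite. If R(A*A) ⊆ R(A*A + w), then R(A*A) + R(w) = R(A*A + w), and in particular R(w) ⊆ R(A*A + w). -/
/-- If `R(A*A) ⊆ R(A*A + w)` then `R(A*A) + R(w) = R(A*A + w)`; in particular
`R(w) ⊆ R(A*A + w)`. -/
theorem stmt_16 {H F : Type*} [NormedAddCommGroup H] [InnerProductSpace ℂ H] [CompleteSpace H]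
    [NormedAddCommGroup F] [InnerProductSpace ℂ F] [CompleteSpace F]
    (A : H →L[ℂ] F) (w : H →L[ℂ] H) (hw : w.IsPositive)
    (h : LinearMap.range (ContinuousLinearMap.adjoint A ∘L A : H →ₗ[ℂ] H) ≤
      LinearMap.range (ContinuousLinearMap.adjoint A ∘L A + w : H →ₗ[ℂ] H)) :
    LinearMap.range (ContinuousLinearMap.adjoint A ∘L A : H →ₗ[ℂ] H) ⊔ LinearMap.range (w : H →ₗ[ℂ] H) =
        LinearMap.range (ContinuousLinearMap.adjoint A ∘L A + w : H →ₗ[ℂ] H) ∧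
      LinearMap.range (w : H →ₗ[ℂ] H) ≤ LinearMap.range (ContinuousLinearMap.adjoint A ∘L A + w : H →ₗ[ℂ] H) := by
  set T := ContinuousLinearMap.adjoint A ∘L A with hT
  have hwle : LinearMap.range (w : H →ₗ[ℂ] H) ≤ LinearMap.range ((T + w : H →L[ℂ] H) : H →ₗ[ℂ] H) := by
    rintro _ ⟨x, rfl⟩
    show w x ∈ _
    have hx : w x = (T + w) x - T x := by simp
    rw [hx]
    exact Submodule.sub_mem _ (LinearMap.mem_range_self _ x) (h (LinearMap.mem_range_self (T : H →ₗ[ℂ] H) x))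
  refine ⟨le_antisymm (sup_le h hwle) ?_, hwle⟩
  rintro _ ⟨x, rfl⟩
  show (T + w) x ∈ _
  have : (T + w) x = T x + w x := by simp
  rw [this]
  exact Submodule.add_mem _ (Submodule.mem_sup_left (LinearMap.mem_range_self (T : H →ₗ[ℂ] H) x))
    (Submodule.mem_sup_right (LinearMap.mem_range_self (w : H →ₗ[ℂ] H) x))
end

section
/- Let W : F → F be positive semidefinite with infinite-dimensional kernel N(W), and let A = P + A₂P', where P is the orthogonal projection onto N(W)^⊥, P' the orthogonal projection onto N(W), and A₂ : N(W) → N(W) a bounded operator with non-closed range (extended by 0 on N(W)^⊥). Then R(A) + W(R(A))^⊥ = F even though R(A) is not closed; i.e. A admits a W-inverse without having closed range. -/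
/-- An operator that is the identity on `N(W)ᗮ` and maps `N(W)` into `N(W)` with non-closed
range there admits a `W`-inverse (i.e. `R(A) + W(R(A))^⊥ = F`) without having closed range. -/
theorem stmt_18 {F : Type*} [NormedAddCommGroup F] [InnerProductSpace ℂ F] [CompleteSpace F]
    [TopologicalSpace.SeparableSpace F]
    (W : F →L[ℂ] F) (hW : W.IsPositive)
    (hker : ¬ FiniteDimensional ℂ (LinearMap.ker (W : F →ₗ[ℂ] F)))
    (A : F →L[ℂ] F)
    (hA1 : ∀ x ∈ (LinearMap.ker (W : F →ₗ[ℂ] F) : Submodule ℂ F)ᗮ, A x = x)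
    (hA2 : ∀ x ∈ LinearMap.ker (W : F →ₗ[ℂ] F), A x ∈ LinearMap.ker (W : F →ₗ[ℂ] F))
    (hA3 : ¬ IsClosed (A '' ((LinearMap.ker (W : F →ₗ[ℂ] F) : Submodule ℂ F) : Set F))) :
    LinearMap.range (A : F →ₗ[ℂ] F) ⊔ (Submodule.map (W : F →ₗ[ℂ] F) (LinearMap.range (A : F →ₗ[ℂ] F)))ᗮ = ⊤ ∧
      ¬ IsClosed ((LinearMap.range (A : F →ₗ[ℂ] F) : Submodule ℂ F) : Set F) := by
  set N : Submodule ℂ F := LinearMap.ker (W : F →ₗ[ℂ] F) with hN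
  have hNclosed : IsClosed (N : Set F) := ContinuousLinearMap.isClosed_ker W
  haveI : CompleteSpace N := hNclosed.completeSpace_coe
  have hsym : (W : F →ₗ[ℂ] F).IsSymmetric := fun x y => hW.1 x y
  constructor
  · rw [eq_top_iff]
    have h1 : Nᗮ ≤ LinearMap.range (A : F →ₗ[ℂ] F) := by
      intro x hx
      exact ⟨x, hA1 x hx⟩
    have h2 : N ≤ (Submodule.map (W : F →ₗ[ℂ] F) (LinearMap.range (A : F →ₗ[ℂ] F)))ᗮ := by
      intro x hx
      rw [Submodule.mem_orthogonal]
      rintro y ⟨z, -, rfl⟩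
      have hx0 : W x = 0 := hx
      calc inner ℂ (W z) x = inner ℂ z (W x) := hsym z x
        _ = (0 : ℂ) := by rw [hx0, inner_zero_right]
    calc (⊤ : Submodule ℂ F) = N ⊔ Nᗮ := (Submodule.sup_orthogonal_of_hasOrthogonalProjection).symm
      _ = Nᗮ ⊔ N := sup_comm _ _
      _ ≤ LinearMap.range (A : F →ₗ[ℂ] F) ⊔ (Submodule.map (W : F →ₗ[ℂ] F) (LinearMap.range (A : F →ₗ[ℂ] F)))ᗮ := sup_le_sup h1 h2
  · intro hclosed
    apply hA3
    have key : A '' (N : Set F) = ((LinearMap.range (A : F →ₗ[ℂ] F) ⊓ N : Submodule ℂ F) : Set F) := by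
      ext y
      constructor
      · rintro ⟨x, hx, rfl⟩
        exact ⟨⟨x, rfl⟩, hA2 x hx⟩
      · rintro ⟨⟨x, rfl⟩, hy⟩
        obtain ⟨p, hp, q, hq, rfl⟩ := N.exists_add_mem_mem_orthogonal x
        have hAx : A (p + q) = A p + q := by rw [map_add, hA1 q hq]
        have hApN : A p ∈ N := hA2 p hp
        have hq0 : q = 0 := by
          have hqN : q ∈ N := by
            have h : q = A (p + q) - A p := by rw [hAx]; abel
            rw [h]
            exact N.sub_mem hy hApN
          exact inner_self_eq_zero.mp (Submodule.inner_right_of_mem_orthogonal hqN hq)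
        refine ⟨p, hp, ?_⟩
        rw [hq0, add_zero] at hAx ⊢
        rfl
    rw [key]
    exact hclosed.inter hNclosed
end
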